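/- (Warp theorem) Let E be a triple vector bundle equipped with a grid consisting of three linear double sections (X_{2,3}; X_2, X_3; X), (Y_{1,3}; Y_1, Y_3; Y), (Z_{1,2}; Z_1, Z_2; Z). Then the three ultrawarps, sections of the ultracore bundle E_{123} → M obtained as the warps of the grids induced on the three core double vector bundles E_{23,1}, E_{13,2}, E_{12,3} (with the stated orientation conventions), satisfy uwarp_BF + uwarp_LR + uwarp_UD = 0. -/

import Mathlib

/-! Algebraic model of (double) vector bundles.

A `PreVB E B` is a vector bundle structure on `E` over the base `B`, recorded
through its structure maps (projection, fibrewise addition, scalar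
multiplication by reals, zero section and fibrewise negation) together with
the usual axioms, all stated for elements lying in a common fibre. -/

structure PreVB (E : Type*) (B : Type*) where
  π : E → B
  add : E → E → E
  smul : ℝ → E → E
  neg : E → E
  zero : B → E
  π_zero : ∀ b, π (zero b) = b
  π_add : ∀ e e', π e = π e' → π (add e e') = π e
  π_smul : ∀ t e, π (smul t e) = π e
  π_neg : ∀ e, π (neg e) = π e
  add_zero : ∀ e, add e (zero (π e)) = e
  zero_add : ∀ e, add (zero (π e)) e = e
  add_comm : ∀ e e', π e = π e' → add e e' = add e' e
  add_assoc : ∀ e₁ e₂ e₃, π e₁ = π e₂ → π e₂ = π e₃ →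
    add (add e₁ e₂) e₃ = add e₁ (add e₂ e₃)
  add_neg : ∀ e, add e (neg e) = zero (π e)
  one_smul : ∀ e, smul 1 e = e
  smul_zero : ∀ t b, smul t (zero b) = zero b
  smul_add : ∀ t e e', π e = π e' → smul t (add e e') = add (smul t e) (smul t e')
  add_smul : ∀ t s e, smul (t + s) e = add (smul t e) (smul s e)
  mul_smul : ∀ t s e, smul (t * s) e = smul t (smul s e)

/-- Fibrewise subtraction. -/
def PreVB.sub {E B : Type*} (V : PreVB E B) (e e' : E) : E := V.add e (V.neg e')

/-- An (algebraic model of a) double vector bundle `(D; A, B; M)`: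
two vector bundle structures on `D`, over the vector bundles `A → M` and
`B → M`, which commute in the categorical sense: each structure map of either
structure on `D` is a morphism of vector bundles with respect to the other
structure.  The field `core_exists` records that the core acts freely and
transitively on the fibres of `D → A ×_M B` (it follows, for genuine double
vector bundles, from `D → A ×_M B` being a surjective submersion). -/
structure DVB (D : Type*) (A : Type*) (B : Type*) (M : Type*) where
  bA : PreVB A M
  bB : PreVB B M
  vA : PreVB D A
  vB : PreVB D B
  proj_compat : ∀ d, bA.π (vA.π d) = bB.π (vB.π d)
  πB_addA : ∀ d d', vA.π d = vA.π d' → vB.π (vA.add d d') = bB.add (vB.π d) (vB.π d')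
  πA_addB : ∀ d d', vB.π d = vB.π d' → vA.π (vB.add d d') = bA.add (vA.π d) (vA.π d')
  πB_smulA : ∀ t d, vB.π (vA.smul t d) = bB.smul t (vB.π d)
  πA_smulB : ∀ t d, vA.π (vB.smul t d) = bA.smul t (vA.π d)
  πB_negA : ∀ d, vB.π (vA.neg d) = bB.neg (vB.π d)
  πA_negB : ∀ d, vA.π (vB.neg d) = bA.neg (vA.π d)
  πB_zeroA : ∀ a, vB.π (vA.zero a) = bB.zero (bA.π a)
  πA_zeroB : ∀ b, vA.π (vB.zero b) = bA.zero (bB.π b)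
  zeroA_add : ∀ a a', bA.π a = bA.π a' →
    vA.zero (bA.add a a') = vB.add (vA.zero a) (vA.zero a')
  zeroB_add : ∀ b b', bB.π b = bB.π b' →
    vB.zero (bB.add b b') = vA.add (vB.zero b) (vB.zero b')
  zeroA_smul : ∀ t a, vA.zero (bA.smul t a) = vB.smul t (vA.zero a)
  zeroB_smul : ∀ t b, vB.zero (bB.smul t b) = vA.smul t (vB.zero b)
  double_zero : ∀ m, vA.zero (bA.zero m) = vB.zero (bB.zero m)
  interchange : ∀ d₁ d₂ d₃ d₄,
    vA.π d₁ = vA.π d₂ → vA.π d₃ = vA.π d₄ →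
    vB.π d₁ = vB.π d₃ → vB.π d₂ = vB.π d₄ →
    vB.add (vA.add d₁ d₂) (vA.add d₃ d₄) = vA.add (vB.add d₁ d₃) (vB.add d₂ d₄)
  smulA_addB : ∀ t d d', vB.π d = vB.π d' →
    vA.smul t (vB.add d d') = vB.add (vA.smul t d) (vA.smul t d')
  smulB_addA : ∀ t d d', vA.π d = vA.π d' →
    vB.smul t (vA.add d d') = vA.add (vB.smul t d) (vB.smul t d')
  smul_smul : ∀ t s d, vA.smul t (vB.smul s d) = vB.smul s (vA.smul t d)
  core_exists : ∀ d d', vA.π d = vA.π d' → vB.π d = vB.π d' →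
    ∃! c : D, (vA.π c = bA.zero (bA.π (vA.π d)) ∧ vB.π c = bB.zero (bA.π (vA.π d))) ∧
      d = vA.add d' (vB.add c (vA.zero (vA.π d)))

/-- `d` is an element of the core of the double vector bundle, sitting over `m ∈ M`. -/
def DVB.CoreAt {D A B M : Type*} (V : DVB D A B M) (m : M) (d : D) : Prop :=
  V.vA.π d = V.bA.zero m ∧ V.vB.π d = V.bB.zero m

/-- A linear section `(ξ, X)` of the double vector bundle: `ξ : B → D` is a
section of `D → B` which is a morphism of vector bundles over `X : M → A`. -/
structure LinSecB {D A B M : Type*} (V : DVB D A B M) where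
  ξ : B → D
  X : M → A
  secX : ∀ m, V.bA.π (X m) = m
  proj : ∀ b, V.vB.π (ξ b) = b
  isOver : ∀ b, V.vA.π (ξ b) = X (V.bB.π b)
  map_add : ∀ b b', V.bB.π b = V.bB.π b' →
    ξ (V.bB.add b b') = V.vA.add (ξ b) (ξ b')
  map_smul : ∀ t b, ξ (V.bB.smul t b) = V.vA.smul t (ξ b)

/-- A linear section `(η, Y)` of the other structure: `η : A → D` is a section
of `D → A` which is a morphism of vector bundles over `Y : M → B`. -/
structure LinSecA {D A B M : Type*} (V : DVB D A B M) where
  η : A → D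
  Y : M → B
  secY : ∀ m, V.bB.π (Y m) = m
  proj : ∀ a, V.vA.π (η a) = a
  isOver : ∀ a, V.vB.π (η a) = Y (V.bA.π a)
  map_add : ∀ a a', V.bA.π a = V.bA.π a' →
    η (V.bA.add a a') = V.vB.add (η a) (η a')
  map_smul : ∀ t a, η (V.bA.smul t a) = V.vB.smul t (η a)

/-- `w : M → D` is (the core-valued function underlying) the warp of the grid
`((ξ, X), (η, Y))`:  pointwise it is a core element and satisfies
`ξ(Y(m)) -_A η(X(m)) = w(m) +_B 0̃_{X(m)}` and
`ξ(Y(m)) -_B η(X(m)) = w(m) +_A 0̃_{Y(m)}`. -/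
def DVB.IsWarp {D A B M : Type*} (V : DVB D A B M)
    (s : LinSecB V) (r : LinSecA V) (w : M → D) : Prop :=
  ∀ m : M, V.CoreAt m (w m) ∧
    V.vA.sub (s.ξ (r.Y m)) (r.η (s.X m)) = V.vB.add (w m) (V.vA.zero (s.X m)) ∧
    V.vB.sub (s.ξ (r.Y m)) (r.η (s.X m)) = V.vA.add (w m) (V.vB.zero (r.Y m))

/-! Algebraic model of triple vector bundles.

A triple vector bundle is a cube of vector bundle structures whose six faces
are double vector bundles; the structures shared between adjacent faces
coincide.  We record the six faces (with the intended identifications: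
`up : (E; E₁₃, E₂₃; E₃)`, `back : (E; E₁₂, E₁₃; E₁)`, `left : (E; E₁₂, E₂₃; E₂)`,
`down : (E₁₂; E₁, E₂; M)`, `right : (E₁₃; E₁, E₃; M)`, `front : (E₂₃; E₂, E₃; M)`)
together with the coherence conditions saying that the same bundle structure
is used whenever two faces share an edge, and that the iterated zero sections
over `E₁`, `E₂`, `E₃` agree. -/
structure TVB (E E12 E13 E23 E1 E2 E3 M : Type*) where
  up : DVB E E13 E23 E3
  back : DVB E E12 E13 E1
  left : DVB E E12 E23 E2
  down : DVB E12 E1 E2 M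
  right : DVB E13 E1 E3 M
  front : DVB E23 E2 E3 M
  coh_E_E12 : back.vA = left.vA
  coh_E_E13 : up.vA = back.vB
  coh_E_E23 : up.vB = left.vB
  coh_E12_E1 : back.bA = down.vA
  coh_E12_E2 : left.bA = down.vB
  coh_E13_E1 : back.bB = right.vA
  coh_E13_E3 : up.bA = right.vB
  coh_E23_E2 : left.bB = front.vA
  coh_E23_E3 : up.bB = front.vB
  coh_E1_M : down.bA = right.bA
  coh_E2_M : down.bB = front.bA
  coh_E3_M : right.bB = front.bB
  zero_coh_E1 : ∀ e1 : E1, back.vA.zero (down.vA.zero e1) = up.vA.zero (right.vA.zero e1)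
  zero_coh_E2 : ∀ e2 : E2, back.vA.zero (down.vB.zero e2) = up.vB.zero (front.vA.zero e2)
  zero_coh_E3 : ∀ e3 : E3, up.vA.zero (right.vB.zero e3) = up.vB.zero (front.vB.zero e3)

namespace TVB

variable {E E12 E13 E23 E1 E2 E3 M : Type*}

/-- The double zero `0̂_{e₁}` of `E` over `e₁ ∈ E₁`. -/
def zE1 (T : TVB E E12 E13 E23 E1 E2 E3 M) (e1 : E1) : E :=
  T.back.vA.zero (T.down.vA.zero e1)

/-- The double zero `0̂_{e₂}` of `E` over `e₂ ∈ E₂`. -/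
def zE2 (T : TVB E E12 E13 E23 E1 E2 E3 M) (e2 : E2) : E :=
  T.back.vA.zero (T.down.vB.zero e2)

/-- The double zero `0̂_{e₃}` of `E` over `e₃ ∈ E₃`. -/
def zE3 (T : TVB E E12 E13 E23 E1 E2 E3 M) (e3 : E3) : E :=
  T.up.vA.zero (T.right.vB.zero e3)

/-- The triple zero `⊙³_m` of `E` over `m ∈ M`. -/
def tripleZero (T : TVB E E12 E13 E23 E1 E2 E3 M) (m : M) : E :=
  T.up.vB.zero (T.front.vA.zero (T.front.bA.zero m))

/-- `e` belongs to the ultracore of `E`, over `m ∈ M`: all three projections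
of `e` are (double) zeros. -/
def UltracoreAt (T : TVB E E12 E13 E23 E1 E2 E3 M) (m : M) (e : E) : Prop :=
  T.back.vA.π e = T.down.vA.zero (T.down.bA.zero m) ∧
  T.up.vA.π e = T.right.vA.zero (T.right.bA.zero m) ∧
  T.up.vB.π e = T.front.vA.zero (T.front.bA.zero m)

end TVB

/-- A down-up linear double section `(Z_{1,2}; Z_1, Z_2; Z)` of a triple vector
bundle: a morphism of double vector bundles from the Down face to the Up
face. -/
structure DULinSec {E E12 E13 E23 E1 E2 E3 M : Type*}
    (T : TVB E E12 E13 E23 E1 E2 E3 M) where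
  z12 : E12 → E
  z1 : E1 → E13
  z2 : E2 → E23
  z : M → E3
  sec12 : ∀ p, T.back.vA.π (z12 p) = p
  over13 : ∀ p, T.up.vA.π (z12 p) = z1 (T.down.vA.π p)
  over23 : ∀ p, T.up.vB.π (z12 p) = z2 (T.down.vB.π p)
  sec1 : ∀ p, T.right.vA.π (z1 p) = p
  over1 : ∀ p, T.right.vB.π (z1 p) = z (T.right.bA.π p)
  sec2 : ∀ p, T.front.vA.π (z2 p) = p
  over2 : ∀ p, T.front.vB.π (z2 p) = z (T.front.bA.π p)
  secz : ∀ m, T.right.bB.π (z m) = m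
  map_add1 : ∀ p q, T.down.vA.π p = T.down.vA.π q →
    z12 (T.down.vA.add p q) = T.up.vA.add (z12 p) (z12 q)
  map_add2 : ∀ p q, T.down.vB.π p = T.down.vB.π q →
    z12 (T.down.vB.add p q) = T.up.vB.add (z12 p) (z12 q)
  map_smul1 : ∀ t p, z12 (T.down.vA.smul t p) = T.up.vA.smul t (z12 p)
  map_smul2 : ∀ t p, z12 (T.down.vB.smul t p) = T.up.vB.smul t (z12 p)
  z1_add : ∀ p q, T.right.bA.π p = T.right.bA.π q →
    z1 (T.right.bA.add p q) = T.right.vB.add (z1 p) (z1 q)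
  z1_smul : ∀ t p, z1 (T.right.bA.smul t p) = T.right.vB.smul t (z1 p)
  z2_add : ∀ p q, T.front.bA.π p = T.front.bA.π q →
    z2 (T.front.bA.add p q) = T.front.vB.add (z2 p) (z2 q)
  z2_smul : ∀ t p, z2 (T.front.bA.smul t p) = T.front.vB.smul t (z2 p)

/-- A front-back linear double section `(X_{2,3}; X_2, X_3; X)`. -/
structure FBLinSec {E E12 E13 E23 E1 E2 E3 M : Type*}
    (T : TVB E E12 E13 E23 E1 E2 E3 M) where
  x23 : E23 → E
  x2 : E2 → E12
  x3 : E3 → E13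
  x : M → E1
  sec23 : ∀ p, T.up.vB.π (x23 p) = p
  over12 : ∀ p, T.back.vA.π (x23 p) = x2 (T.front.vA.π p)
  over13 : ∀ p, T.up.vA.π (x23 p) = x3 (T.front.vB.π p)
  sec2 : ∀ p, T.down.vB.π (x2 p) = p
  over2 : ∀ p, T.down.vA.π (x2 p) = x (T.down.bB.π p)
  sec3 : ∀ p, T.right.vB.π (x3 p) = p
  over3 : ∀ p, T.right.vA.π (x3 p) = x (T.right.bB.π p)
  secx : ∀ m, T.down.bA.π (x m) = m
  map_add2 : ∀ p q, T.front.vA.π p = T.front.vA.π q →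
    x23 (T.front.vA.add p q) = T.back.vA.add (x23 p) (x23 q)
  map_add3 : ∀ p q, T.front.vB.π p = T.front.vB.π q →
    x23 (T.front.vB.add p q) = T.up.vA.add (x23 p) (x23 q)
  map_smul2 : ∀ t p, x23 (T.front.vA.smul t p) = T.back.vA.smul t (x23 p)
  map_smul3 : ∀ t p, x23 (T.front.vB.smul t p) = T.up.vA.smul t (x23 p)
  x2_add : ∀ p q, T.down.bB.π p = T.down.bB.π q →
    x2 (T.down.bB.add p q) = T.down.vA.add (x2 p) (x2 q)
  x2_smul : ∀ t p, x2 (T.down.bB.smul t p) = T.down.vA.smul t (x2 p)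
  x3_add : ∀ p q, T.right.bB.π p = T.right.bB.π q →
    x3 (T.right.bB.add p q) = T.right.vA.add (x3 p) (x3 q)
  x3_smul : ∀ t p, x3 (T.right.bB.smul t p) = T.right.vA.smul t (x3 p)

/-- A right-left linear double section `(Y_{1,3}; Y_1, Y_3; Y)`. -/
structure RLLinSec {E E12 E13 E23 E1 E2 E3 M : Type*}
    (T : TVB E E12 E13 E23 E1 E2 E3 M) where
  y13 : E13 → E
  y1 : E1 → E12
  y3 : E3 → E23
  y : M → E2
  sec13 : ∀ p, T.up.vA.π (y13 p) = p
  over12 : ∀ p, T.back.vA.π (y13 p) = y1 (T.right.vA.π p)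
  over23 : ∀ p, T.up.vB.π (y13 p) = y3 (T.right.vB.π p)
  sec1 : ∀ p, T.down.vA.π (y1 p) = p
  over1 : ∀ p, T.down.vB.π (y1 p) = y (T.down.bA.π p)
  sec3 : ∀ p, T.front.vB.π (y3 p) = p
  over3 : ∀ p, T.front.vA.π (y3 p) = y (T.front.bB.π p)
  secy : ∀ m, T.down.bB.π (y m) = m
  map_add1 : ∀ p q, T.right.vA.π p = T.right.vA.π q →
    y13 (T.right.vA.add p q) = T.back.vA.add (y13 p) (y13 q)
  map_add3 : ∀ p q, T.right.vB.π p = T.right.vB.π q →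
    y13 (T.right.vB.add p q) = T.up.vB.add (y13 p) (y13 q)
  map_smul1 : ∀ t p, y13 (T.right.vA.smul t p) = T.back.vA.smul t (y13 p)
  map_smul3 : ∀ t p, y13 (T.right.vB.smul t p) = T.up.vB.smul t (y13 p)
  y1_add : ∀ p q, T.down.bA.π p = T.down.bA.π q →
    y1 (T.down.bA.add p q) = T.down.vB.add (y1 p) (y1 q)
  y1_smul : ∀ t p, y1 (T.down.bA.smul t p) = T.down.vB.smul t (y1 p)
  y3_add : ∀ p q, T.front.bB.π p = T.front.bB.π q →
    y3 (T.front.bB.add p q) = T.front.vA.add (y3 p) (y3 q)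
  y3_smul : ∀ t p, y3 (T.front.bB.smul t p) = T.front.vA.smul t (y3 p)

section AuxPreVB

namespace PreVB

variable {E B : Type*} (V : PreVB E B)

lemma pi_sub {a b : E} (h : V.π a = V.π b) : V.π (V.sub a b) = V.π a := by
  unfold PreVB.sub
  rw [V.π_add _ _ (by rw [V.π_neg]; exact h)]

lemma idem_eq_zero {a : E} (h : V.add a a = a) : a = V.zero (V.π a) := by
  have h1 : V.add (V.add a a) (V.neg a) = V.add a (V.add a (V.neg a)) :=
    V.add_assoc a a (V.neg a) rfl (V.π_neg a).symm
  rw [h, V.add_neg, V.add_zero] at h1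
  exact h1.symm

lemma smul_zero' (e : E) : V.smul 0 e = V.zero (V.π e) := by
  have h : V.add (V.smul 0 e) (V.smul 0 e) = V.smul 0 e := by
    rw [← V.add_smul]; norm_num
  have := V.idem_eq_zero h
  rwa [V.π_smul] at this

lemma add_left_cancel {a x y : E} (hx : V.π x = V.π a) (hy : V.π y = V.π a)
    (h : V.add a x = V.add a y) : x = y := by
  have e1 : ∀ w : E, V.π w = V.π a → V.add (V.neg a) (V.add a w) = w := by
    intro w hw
    rw [← V.add_assoc _ _ _ (V.π_neg a) hw.symm]
    rw [V.add_comm (V.neg a) a (V.π_neg a), V.add_neg]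
    have : V.zero (V.π a) = V.zero (V.π w) := by rw [hw]
    rw [this, V.zero_add]
  calc x = V.add (V.neg a) (V.add a x) := (e1 x hx).symm
    _ = V.add (V.neg a) (V.add a y) := by rw [h]
    _ = y := e1 y hy

lemma neg_eq_smul (e : E) : V.neg e = V.smul (-1) e := by
  apply V.add_left_cancel (a := e) (V.π_neg e) (by rw [V.π_smul])
  rw [V.add_neg]
  have : V.add e (V.smul (-1) e) = V.zero (V.π e) := by
    nth_rewrite 1 [← V.one_smul e]
    rw [← V.add_smul]; norm_num
    exact V.smul_zero' e
  rw [this]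

lemma neg_neg (e : E) : V.neg (V.neg e) = e := by
  rw [V.neg_eq_smul, V.neg_eq_smul e, ← V.mul_smul]
  norm_num
  exact V.one_smul e

lemma neg_zero' (b : B) : V.neg (V.zero b) = V.zero b := by
  rw [V.neg_eq_smul, V.smul_zero]

lemma neg_add {a b : E} (h : V.π a = V.π b) :
    V.neg (V.add a b) = V.add (V.neg a) (V.neg b) := by
  rw [V.neg_eq_smul, V.smul_add _ _ _ h, ← V.neg_eq_smul, ← V.neg_eq_smul]

lemma neg_sub {a b : E} (h : V.π a = V.π b) :
    V.neg (V.sub a b) = V.sub b a := by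
  unfold PreVB.sub
  rw [V.neg_add (by rw [V.π_neg]; exact h), V.neg_neg,
    V.add_comm _ _ (by rw [V.π_neg]; exact h)]

lemma sub_self (a : E) : V.sub a a = V.zero (V.π a) := V.add_neg a

lemma sub_zero' (a : E) : V.sub a (V.zero (V.π a)) = a := by
  unfold PreVB.sub
  rw [V.neg_zero', V.add_zero]

lemma zero_add_zero (b : B) : V.add (V.zero b) (V.zero b) = V.zero b := by
  have := V.add_zero (V.zero b)
  rwa [V.π_zero] at this

lemma sub_add_cancel {a b : E} (h : V.π a = V.π b) : V.add (V.sub a b) b = a := by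
  unfold PreVB.sub
  rw [V.add_assoc _ _ _ (by rw [V.π_neg]; exact h) (V.π_neg b),
    V.add_comm (V.neg b) b (V.π_neg b), V.add_neg]
  have : V.zero (V.π b) = V.zero (V.π a) := by rw [h]
  rw [this, V.add_zero]

lemma eq_add_of_sub_eq {a b c : E} (h : V.π a = V.π b) (he : V.sub a b = c) :
    a = V.add c b := by rw [← he, V.sub_add_cancel h]

lemma add_sub_cancel {w f : E} (h : V.π w = V.π f) : V.sub (V.add w f) f = w := by
  unfold PreVB.sub
  rw [V.add_assoc _ _ _ h (V.π_neg f).symm, V.add_neg]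
  have : V.zero (V.π f) = V.zero (V.π w) := by rw [h]
  rw [this, V.add_zero]

lemma add_sub_cancel_left {a u : E} (h : V.π a = V.π u) : V.sub (V.add a u) a = u := by
  rw [V.add_comm a u h]
  exact V.add_sub_cancel h.symm

lemma eq_sub_of_add_eq {a w b : E} (h : V.π w = V.π a) (he : V.add a w = b) :
    w = V.sub b a := by rw [← he, V.add_sub_cancel_left h.symm]

lemma add_sub_cancel' {a b : E} (h : V.π a = V.π b) : V.add a (V.sub b a) = b := by
  have hp : V.π a = V.π (V.sub b a) := by rw [V.pi_sub h.symm, h]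
  rw [V.add_comm a (V.sub b a) hp, V.sub_add_cancel h.symm]

lemma add_add_add_comm {a b c d : E} {p : B}
    (ha : V.π a = p) (hb : V.π b = p) (hc : V.π c = p) (hd : V.π d = p) :
    V.add (V.add a b) (V.add c d) = V.add (V.add a c) (V.add b d) := by
  have hab : V.π (V.add a b) = p := by rw [V.π_add _ _ (ha.trans hb.symm)]; exact ha
  have hcd : V.π (V.add c d) = p := by rw [V.π_add _ _ (hc.trans hd.symm)]; exact hc
  rw [V.add_assoc a b (V.add c d) (ha.trans hb.symm) (hb.trans hcd.symm)]
  rw [← V.add_assoc b c d (hb.trans hc.symm) (hc.trans hd.symm)]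
  rw [V.add_comm b c (hb.trans hc.symm)]
  rw [V.add_assoc c b d (hc.trans hb.symm) (hb.trans hd.symm)]
  have hbd : V.π (V.add b d) = p := by rw [V.π_add _ _ (hb.trans hd.symm)]; exact hb
  rw [← V.add_assoc a c (V.add b d) (ha.trans hc.symm) (hc.trans hbd.symm)]

lemma add_sub_add {a b c d : E} {p : B}
    (ha : V.π a = p) (hb : V.π b = p) (hc : V.π c = p) (hd : V.π d = p) :
    V.sub (V.add a b) (V.add c d) = V.add (V.sub a c) (V.sub b d) := by
  unfold PreVB.sub
  rw [V.neg_add (hc.trans hd.symm)]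
  exact V.add_add_add_comm ha hb (by rw [V.π_neg]; exact hc) (by rw [V.π_neg]; exact hd)

lemma sub_sub_sub {p q r : E} (hq : V.π q = V.π p) (hr : V.π r = V.π p) :
    V.sub (V.sub p q) (V.sub p r) = V.sub r q := by
  show V.add (V.add p (V.neg q)) (V.neg (V.sub p r)) = V.sub r q
  rw [V.neg_sub hr.symm]
  show V.add (V.add p (V.neg q)) (V.add r (V.neg p)) = V.sub r q
  rw [V.add_comm r (V.neg p) (by rw [V.π_neg]; exact hr)]
  rw [V.add_add_add_comm (p := V.π p) rfl (by rw [V.π_neg]; exact hq)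
    (by rw [V.π_neg]) hr]
  rw [V.add_neg]
  have h0 : V.zero (V.π p) = V.zero (V.π (V.add (V.neg q) r)) := by
    rw [V.π_add _ _ (by rw [V.π_neg]; exact hq.trans hr.symm), V.π_neg, hq]
  rw [h0, V.zero_add, V.add_comm (V.neg q) r (by rw [V.π_neg]; exact hq.trans hr.symm)]
  rfl

lemma add_sub_add_right_cancel {a b p : E} (ha : V.π a = V.π p) (hb : V.π b = V.π p) :
    V.sub (V.add a p) (V.add b p) = V.sub a b := by
  rw [V.add_sub_add (p := V.π p) ha rfl hb rfl, V.sub_self]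
  have : V.zero (V.π p) = V.zero (V.π (V.sub a b)) := by
    rw [V.pi_sub (ha.trans hb.symm), ha]
  rw [this, V.add_zero]

lemma add_left_comm {a b c : E} {p : B}
    (ha : V.π a = p) (hb : V.π b = p) (hc : V.π c = p) :
    V.add a (V.add b c) = V.add b (V.add a c) := by
  rw [← V.add_assoc a b c (ha.trans hb.symm) (hb.trans hc.symm),
    V.add_comm a b (ha.trans hb.symm),
    V.add_assoc b a c (hb.trans ha.symm) (ha.trans hc.symm)]

lemma final_algebra {u1 u2 : E} (h : V.π u2 = V.π u1) :
    V.add u1 (V.add u2 (V.sub (V.neg u2) u1)) = V.zero (V.π u1) := by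
  have h1 : V.add u2 (V.sub (V.neg u2) u1) = V.neg u1 := by
    show V.add u2 (V.add (V.neg u2) (V.neg u1)) = V.neg u1
    rw [← V.add_assoc u2 (V.neg u2) (V.neg u1) (V.π_neg u2).symm
      (by rw [V.π_neg, V.π_neg]; exact h), V.add_neg]
    have : V.zero (V.π u2) = V.zero (V.π (V.neg u1)) := by rw [V.π_neg, h]
    rw [this, V.zero_add]
  rw [h1, V.add_neg]

end PreVB

end AuxPreVB

section AuxDVB

namespace DVB

variable {D A B M : Type*} (V : DVB D A B M)

lemma interchange' (a b c d : D)
    (hab : V.vB.π a = V.vB.π b) (hcd : V.vB.π c = V.vB.π d)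
    (hac : V.vA.π a = V.vA.π c) (hbd : V.vA.π b = V.vA.π d) :
    V.vA.add (V.vB.add a b) (V.vB.add c d) = V.vB.add (V.vA.add a c) (V.vA.add b d) :=
  (V.interchange a c b d hac hbd hab hcd).symm

lemma negB_addA {d d' : D} (h : V.vA.π d = V.vA.π d') :
    V.vB.neg (V.vA.add d d') = V.vA.add (V.vB.neg d) (V.vB.neg d') := by
  rw [V.vB.neg_eq_smul, V.smulB_addA _ _ _ h, ← V.vB.neg_eq_smul, ← V.vB.neg_eq_smul]

lemma negA_addB {d d' : D} (h : V.vB.π d = V.vB.π d') :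
    V.vA.neg (V.vB.add d d') = V.vB.add (V.vA.neg d) (V.vA.neg d') := by
  rw [V.vA.neg_eq_smul, V.smulA_addB _ _ _ h, ← V.vA.neg_eq_smul, ← V.vA.neg_eq_smul]

lemma neg_comm (d : D) : V.vA.neg (V.vB.neg d) = V.vB.neg (V.vA.neg d) := by
  rw [V.vA.neg_eq_smul, V.vB.neg_eq_smul, V.smul_smul, ← V.vA.neg_eq_smul,
    ← V.vB.neg_eq_smul]

lemma πB_subA {d d' : D} (h : V.vA.π d = V.vA.π d') :
    V.vB.π (V.vA.sub d d') = V.bB.sub (V.vB.π d) (V.vB.π d') := by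
  show V.vB.π (V.vA.add d (V.vA.neg d')) = V.bB.add (V.vB.π d) (V.bB.neg (V.vB.π d'))
  rw [V.πB_addA _ _ (by rw [V.vA.π_neg]; exact h), V.πB_negA]

lemma πA_subB {d d' : D} (h : V.vB.π d = V.vB.π d') :
    V.vA.π (V.vB.sub d d') = V.bA.sub (V.vA.π d) (V.vA.π d') := by
  show V.vA.π (V.vB.add d (V.vB.neg d')) = V.bA.add (V.vA.π d) (V.bA.neg (V.vA.π d'))
  rw [V.πA_addB _ _ (by rw [V.vB.π_neg]; exact h), V.πA_negB]

lemma subB_addA {d₁ d₂ d₃ d₄ : D}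
    (h12 : V.vA.π d₁ = V.vA.π d₂) (h34 : V.vA.π d₃ = V.vA.π d₄)
    (h13 : V.vB.π d₁ = V.vB.π d₃) (h24 : V.vB.π d₂ = V.vB.π d₄) :
    V.vB.sub (V.vA.add d₁ d₂) (V.vA.add d₃ d₄)
      = V.vA.add (V.vB.sub d₁ d₃) (V.vB.sub d₂ d₄) := by
  show V.vB.add (V.vA.add d₁ d₂) (V.vB.neg (V.vA.add d₃ d₄)) = _
  rw [V.negB_addA h34]
  exact V.interchange d₁ d₂ (V.vB.neg d₃) (V.vB.neg d₄) h12
    (by rw [V.πA_negB, V.πA_negB, h34])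
    (by rw [V.vB.π_neg]; exact h13) (by rw [V.vB.π_neg]; exact h24)

lemma subA_addB {d₁ d₂ d₃ d₄ : D}
    (h12 : V.vB.π d₁ = V.vB.π d₂) (h34 : V.vB.π d₃ = V.vB.π d₄)
    (h13 : V.vA.π d₁ = V.vA.π d₃) (h24 : V.vA.π d₂ = V.vA.π d₄) :
    V.vA.sub (V.vB.add d₁ d₂) (V.vB.add d₃ d₄)
      = V.vB.add (V.vA.sub d₁ d₃) (V.vA.sub d₂ d₄) := by
  show V.vA.add (V.vB.add d₁ d₂) (V.vA.neg (V.vB.add d₃ d₄)) = _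
  rw [V.negA_addB h34]
  exact V.interchange' d₁ d₂ (V.vA.neg d₃) (V.vA.neg d₄) h12
    (by rw [V.πB_negA, V.πB_negA, h34])
    (by rw [V.vA.π_neg]; exact h13) (by rw [V.vA.π_neg]; exact h24)

lemma subB_negA {d₂ d₄ : D} (h24 : V.vB.π d₂ = V.vB.π d₄) :
    V.vB.sub (V.vA.neg d₂) (V.vA.neg d₄) = V.vA.neg (V.vB.sub d₂ d₄) := by
  show V.vB.add (V.vA.neg d₂) (V.vB.neg (V.vA.neg d₄)) = _
  rw [← V.neg_comm d₄, ← V.negA_addB (by rw [V.vB.π_neg]; exact h24)]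
  rfl

lemma subA_negB {d₂ d₄ : D} (h24 : V.vA.π d₂ = V.vA.π d₄) :
    V.vA.sub (V.vB.neg d₂) (V.vB.neg d₄) = V.vB.neg (V.vA.sub d₂ d₄) := by
  show V.vA.add (V.vB.neg d₂) (V.vA.neg (V.vB.neg d₄)) = _
  rw [V.neg_comm d₄, ← V.negB_addA (by rw [V.vA.π_neg]; exact h24)]
  rfl

lemma subB_subA {d₁ d₂ d₃ d₄ : D}
    (h12 : V.vA.π d₁ = V.vA.π d₂) (h34 : V.vA.π d₃ = V.vA.π d₄)
    (h13 : V.vB.π d₁ = V.vB.π d₃) (h24 : V.vB.π d₂ = V.vB.π d₄) :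
    V.vB.sub (V.vA.sub d₁ d₂) (V.vA.sub d₃ d₄)
      = V.vA.sub (V.vB.sub d₁ d₃) (V.vB.sub d₂ d₄) := by
  show V.vB.sub (V.vA.add d₁ (V.vA.neg d₂)) (V.vA.add d₃ (V.vA.neg d₄)) = _
  rw [V.subB_addA (by rw [V.vA.π_neg]; exact h12) (by rw [V.vA.π_neg]; exact h34)
    h13 (by rw [V.πB_negA, V.πB_negA, h24])]
  rw [V.subB_negA h24]
  rfl

lemma subA_subB {d₁ d₂ d₃ d₄ : D}
    (h12 : V.vB.π d₁ = V.vB.π d₂) (h34 : V.vB.π d₃ = V.vB.π d₄)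
    (h13 : V.vA.π d₁ = V.vA.π d₃) (h24 : V.vA.π d₂ = V.vA.π d₄) :
    V.vA.sub (V.vB.sub d₁ d₂) (V.vB.sub d₃ d₄)
      = V.vB.sub (V.vA.sub d₁ d₃) (V.vA.sub d₂ d₄) := by
  show V.vA.sub (V.vB.add d₁ (V.vB.neg d₂)) (V.vB.add d₃ (V.vB.neg d₄)) = _
  rw [V.subA_addB (by rw [V.vB.π_neg]; exact h12) (by rw [V.vB.π_neg]; exact h34)
    h13 (by rw [V.πA_negB, V.πA_negB, h24])]
  rw [V.subA_negB h24]
  rfl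

lemma zeroA_neg (a : A) : V.vA.zero (V.bA.neg a) = V.vB.neg (V.vA.zero a) := by
  rw [V.bA.neg_eq_smul, V.zeroA_smul, ← V.vB.neg_eq_smul]

lemma zeroB_neg (b : B) : V.vB.zero (V.bB.neg b) = V.vA.neg (V.vB.zero b) := by
  rw [V.bB.neg_eq_smul, V.zeroB_smul, ← V.vA.neg_eq_smul]

lemma zeroA_sub {a a' : A} (h : V.bA.π a = V.bA.π a') :
    V.vA.zero (V.bA.sub a a') = V.vB.sub (V.vA.zero a) (V.vA.zero a') := by
  show V.vA.zero (V.bA.add a (V.bA.neg a')) = V.vB.add (V.vA.zero a) (V.vB.neg (V.vA.zero a'))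
  rw [V.zeroA_add _ _ (by rw [V.bA.π_neg]; exact h), V.zeroA_neg]

lemma zeroB_sub {b b' : B} (h : V.bB.π b = V.bB.π b') :
    V.vB.zero (V.bB.sub b b') = V.vA.sub (V.vB.zero b) (V.vB.zero b') := by
  show V.vB.zero (V.bB.add b (V.bB.neg b')) = V.vA.add (V.vB.zero b) (V.vA.neg (V.vB.zero b'))
  rw [V.zeroB_add _ _ (by rw [V.bB.π_neg]; exact h), V.zeroB_neg]

lemma coreAdd_eq {m : M} {c c' : D} (hc : V.CoreAt m c) (hc' : V.CoreAt m c') :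
    V.vA.add c c' = V.vB.add c c' := by
  set z := V.vA.zero (V.bA.zero m) with hzdef
  have hz : z = V.vB.zero (V.bB.zero m) := V.double_zero m
  have hzA : V.vA.π z = V.bA.zero m := V.vA.π_zero _
  have hzB : V.vB.π z = V.bB.zero m := by rw [hz, V.vB.π_zero]
  have key := V.interchange c z z c' (hc.1.trans hzA.symm) (hzA.trans hc'.1.symm)
    (hc.2.trans hzB.symm) (hzB.trans hc'.2.symm)
  have e1 : V.vA.add c z = c := by
    have : z = V.vA.zero (V.vA.π c) := by rw [hc.1]
    rw [this, V.vA.add_zero]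
  have e2 : V.vA.add z c' = c' := by
    have : z = V.vA.zero (V.vA.π c') := by rw [hc'.1]
    rw [this, V.vA.zero_add]
  have e3 : V.vB.add c z = c := by
    have : z = V.vB.zero (V.vB.π c) := by rw [hc.2, hz]
    rw [this, V.vB.add_zero]
  have e4 : V.vB.add z c' = c' := by
    have : z = V.vB.zero (V.vB.π c') := by rw [hc'.2, hz]
    rw [this, V.vB.zero_add]
  rw [e1, e2, e3, e4] at key
  exact key.symm

lemma core_negB {m : M} {c : D} (hc : V.CoreAt m c) : V.CoreAt m (V.vB.neg c) :=
  ⟨by rw [V.πA_negB, hc.1, V.bA.neg_zero'], by rw [V.vB.π_neg, hc.2]⟩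

lemma core_negA {m : M} {c : D} (hc : V.CoreAt m c) : V.CoreAt m (V.vA.neg c) :=
  ⟨by rw [V.vA.π_neg, hc.1], by rw [V.πB_negA, hc.2, V.bB.neg_zero']⟩

lemma core_neg {m : M} {c : D} (hc : V.CoreAt m c) : V.vA.neg c = V.vB.neg c := by
  have hc2 := V.core_negB hc
  have h1 : V.vA.add c (V.vB.neg c) = V.vA.add c (V.vA.neg c) := by
    rw [V.coreAdd_eq hc hc2, V.vB.add_neg, hc.2, ← V.double_zero, ← hc.1, V.vA.add_neg]
  exact (V.vA.add_left_cancel (hc2.1.trans hc.1.symm) (V.vA.π_neg c) h1).symm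

lemma core_sub {m : M} {c c' : D} (hc : V.CoreAt m c) (hc' : V.CoreAt m c') :
    V.vA.sub c c' = V.vB.sub c c' := by
  show V.vA.add c (V.vA.neg c') = V.vB.add c (V.vB.neg c')
  rw [V.core_neg hc']
  exact V.coreAdd_eq hc (V.core_negB hc')

lemma warp_flip {d d' c : D}
    (h1 : V.vA.π d = V.vA.π d') (h2 : V.vB.π d = V.vB.π d')
    (hc : V.CoreAt (V.bA.π (V.vA.π d)) c)
    (heq : V.vA.sub d d' = V.vB.add (V.vA.zero (V.vA.π d)) c) :
    V.vB.sub d d' = V.vA.add (V.vB.zero (V.vB.π d)) c := by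
  set a := V.vA.π d with ha
  have hza : V.vB.π (V.vA.zero a) = V.bB.zero (V.bA.π a) := V.πB_zeroA a
  have hcB : V.vB.π c = V.bB.zero (V.bA.π a) := hc.2
  have hcA : V.vA.π c = V.bA.zero (V.bA.π a) := hc.1
  have hzc : V.vB.π (V.vA.zero a) = V.vB.π c := hza.trans hcB.symm
  set K := V.vB.add (V.vA.zero a) c with hK
  have step1 : d = V.vA.add K d' := V.vA.eq_add_of_sub_eq h1 heq
  have hKA : V.vA.π K = a := by
    rw [hK, V.πA_addB _ _ hzc, V.vA.π_zero, hcA]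
    have := V.bA.add_zero a
    rwa [] at this
  have hKB : V.vB.π K = V.vB.π (V.vA.zero a) := by
    rw [hK, V.vB.π_add _ _ hzc]
  have step2 : V.vB.sub d d'
      = V.vB.sub (V.vA.add K d') (V.vA.add (V.vA.zero a) d') := by
    rw [← step1]
    congr 1
    have : V.vA.zero a = V.vA.zero (V.vA.π d') := by rw [← h1]
    rw [this, V.vA.zero_add]
  rw [step2, V.subB_addA (hKA.trans h1) (by rw [V.vA.π_zero]; exact h1)
    hKB (by rfl)]
  rw [V.vB.sub_self d']
  rw [hK, V.vB.add_sub_cancel_left hzc]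
  have hπc : V.vA.π c = V.vA.π (V.vB.zero (V.vB.π d')) := by
    rw [V.πA_zeroB, ← V.proj_compat, ← h1, hcA]
  rw [V.vA.add_comm c _ hπc, ← h2]

lemma warp_flip' {d d' c : D}
    (h1 : V.vB.π d = V.vB.π d') (h2 : V.vA.π d = V.vA.π d')
    (hc : V.CoreAt (V.bB.π (V.vB.π d)) c)
    (heq : V.vB.sub d d' = V.vA.add (V.vB.zero (V.vB.π d)) c) :
    V.vA.sub d d' = V.vB.add (V.vA.zero (V.vA.π d)) c := by
  set b := V.vB.π d with hb
  have hza : V.vA.π (V.vB.zero b) = V.bA.zero (V.bB.π b) := V.πA_zeroB b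
  have hcB : V.vB.π c = V.bB.zero (V.bB.π b) := hc.2
  have hcA : V.vA.π c = V.bA.zero (V.bB.π b) := hc.1
  have hzc : V.vA.π (V.vB.zero b) = V.vA.π c := hza.trans hcA.symm
  set K := V.vA.add (V.vB.zero b) c with hK
  have step1 : d = V.vB.add K d' := V.vB.eq_add_of_sub_eq h1 heq
  have hKB : V.vB.π K = b := by
    rw [hK, V.πB_addA _ _ hzc, V.vB.π_zero, hcB]
    have := V.bB.add_zero b
    rwa [] at this
  have hKA : V.vA.π K = V.vA.π (V.vB.zero b) := by
    rw [hK, V.vA.π_add _ _ hzc]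
  have step2 : V.vA.sub d d'
      = V.vA.sub (V.vB.add K d') (V.vB.add (V.vB.zero b) d') := by
    rw [← step1]
    congr 1
    have : V.vB.zero b = V.vB.zero (V.vB.π d') := by rw [← h1]
    rw [this, V.vB.zero_add]
  rw [step2, V.subA_addB (hKB.trans h1) (by rw [V.vB.π_zero]; exact h1)
    hKA (by rfl)]
  rw [V.vA.sub_self d']
  rw [hK, V.vA.add_sub_cancel_left hzc]
  have hπc : V.vB.π c = V.vB.π (V.vA.zero (V.vA.π d')) := by
    rw [V.πB_zeroA, V.proj_compat, ← h1, hcB]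
  rw [V.vB.add_comm c _ hπc, ← h2]

end DVB

end AuxDVB

section AuxMap

/-- generic: a map intertwining `smul` sends zeros over projections to zeros. -/
lemma map_zero_of_smul {α β γ δ : Type*} (Vs : PreVB α γ) (Vt : PreVB β δ)
    (f : α → β) (hsm : ∀ t p, f (Vs.smul t p) = Vt.smul t (f p)) (p : α) :
    f (Vs.zero (Vs.π p)) = Vt.zero (Vt.π (f p)) := by
  rw [← Vs.smul_zero' p, hsm, Vt.smul_zero']

/-- generic: a map intertwining `add` and `smul` intertwines `sub`. -/
lemma map_sub_of {α β γ δ : Type*} (Vs : PreVB α γ) (Vt : PreVB β δ)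
    (f : α → β)
    (hadd : ∀ p q, Vs.π p = Vs.π q → f (Vs.add p q) = Vt.add (f p) (f q))
    (hsm : ∀ t p, f (Vs.smul t p) = Vt.smul t (f p))
    {p q : α} (h : Vs.π p = Vs.π q) :
    f (Vs.sub p q) = Vt.sub (f p) (f q) := by
  show f (Vs.add p (Vs.neg q)) = Vt.add (f p) (Vt.neg (f q))
  rw [hadd _ _ (by rw [Vs.π_neg]; exact h), Vs.neg_eq_smul, hsm, ← Vt.neg_eq_smul]

end AuxMap

/-- **Warp theorem.**  Let `E` be a triple vector bundle with a
grid consisting of a front-back linear double section `(X_{2,3}; X_2, X_3; X)`,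
a right-left one `(Y_{1,3}; Y_1, Y_3; Y)` and a down-up one
`(Z_{1,2}; Z_1, Z_2; Z)`.  Let `warp_up, …, warp_right` be the warps of the six
faces and `u₁ = uwarp_{B-F}`, `u₂ = uwarp_{L-R}`, `u₃ = uwarp_{U-D}` the three
ultrawarps (warps of the grids induced on the three core double vector
bundles, with the orientation conventions of the paper).  Then
`uwarp_{B-F} + uwarp_{L-R} + uwarp_{U-D} = 0`. -/
theorem tvb_warp_theorem {E E12 E13 E23 E1 E2 E3 M : Type*}
    (T : TVB E E12 E13 E23 E1 E2 E3 M)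
    (XS : FBLinSec T) (YS : RLLinSec T) (ZS : DULinSec T)
    (wup : E3 → E) (wdown : M → E12) (wback : E1 → E) (wfront : M → E23)
    (wleft : E2 → E) (wright : M → E13) (u1 u2 u3 : M → E)
    -- warp of the Up face: Y₁₃(X₃(e₃)) -₁,₃ X₂₃(Y₃(e₃)) = 0̂_{X₃(e₃)} +₂,₃ warp_up(e₃)
    (hwup : ∀ e3 : E3,
      (T.up.vA.π (wup e3) = T.up.bA.zero e3 ∧ T.up.vB.π (wup e3) = T.up.bB.zero e3) ∧
      T.up.vA.sub (YS.y13 (XS.x3 e3)) (XS.x23 (YS.y3 e3)) =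
        T.up.vB.add (T.up.vA.zero (XS.x3 e3)) (wup e3))
    -- warp of the Down face
    (hwdown : ∀ m : M,
      (T.down.vA.π (wdown m) = T.down.bA.zero m ∧ T.down.vB.π (wdown m) = T.down.bB.zero m) ∧
      T.down.vA.sub (YS.y1 (XS.x m)) (XS.x2 (YS.y m)) =
        T.down.vB.add (T.down.vA.zero (XS.x m)) (wdown m))
    -- warp of the Back face: Z₁₂(Y₁(e₁)) -₁,₂ Y₁₃(Z₁(e₁)) = 0̂_{Y₁(e₁)} +₁,₃ warp_back(e₁)
    (hwback : ∀ e1 : E1,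
      (T.back.vA.π (wback e1) = T.back.bA.zero e1 ∧ T.back.vB.π (wback e1) = T.back.bB.zero e1) ∧
      T.back.vA.sub (ZS.z12 (YS.y1 e1)) (YS.y13 (ZS.z1 e1)) =
        T.back.vB.add (T.back.vA.zero (YS.y1 e1)) (wback e1))
    -- warp of the Front face
    (hwfront : ∀ m : M,
      (T.front.vA.π (wfront m) = T.front.bA.zero m ∧ T.front.vB.π (wfront m) = T.front.bB.zero m) ∧
      T.front.vA.sub (ZS.z2 (YS.y m)) (YS.y3 (ZS.z m)) =
        T.front.vB.add (T.front.vA.zero (YS.y m)) (wfront m))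
    -- warp of the Left face: X₂₃(Z₂(e₂)) -₁,₂ Z₁₂(X₂(e₂)) = 0̂_{X₂(e₂)} +₂,₃ warp_left(e₂)
    (hwleft : ∀ e2 : E2,
      (T.left.vA.π (wleft e2) = T.left.bA.zero e2 ∧ T.left.vB.π (wleft e2) = T.left.bB.zero e2) ∧
      T.left.vA.sub (XS.x23 (ZS.z2 e2)) (ZS.z12 (XS.x2 e2)) =
        T.left.vB.add (T.left.vA.zero (XS.x2 e2)) (wleft e2))
    -- warp of the Right face
    (hwright : ∀ m : M,
      (T.right.vA.π (wright m) = T.right.bA.zero m ∧ T.right.vB.π (wright m) = T.right.bB.zero m) ∧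
      T.right.vA.sub (XS.x3 (ZS.z m)) (ZS.z1 (XS.x m)) =
        T.right.vB.add (T.right.vA.zero (XS.x m)) (wright m))
    -- ultrawarp of the (B-F) core double vector bundle:
    -- warp_back(X(m)) -₁,₃ X₂₃(warp_front(m)) = 0̂_{X(m)} +₂,₃ u₁(m)
    (hu1 : ∀ m : M, T.UltracoreAt m (u1 m) ∧
      T.up.vA.sub (wback (XS.x m)) (XS.x23 (wfront m)) =
        T.up.vB.add (T.zE1 (XS.x m)) (u1 m))
    -- ultrawarp of the (L-R) core double vector bundle:
    -- warp_left(Y(m)) -₂,₃ Y₁₃(warp_right(m)) = 0̂_{Y(m)} +₁,₃ u₂(m)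
    (hu2 : ∀ m : M, T.UltracoreAt m (u2 m) ∧
      T.up.vB.sub (wleft (YS.y m)) (YS.y13 (wright m)) =
        T.up.vA.add (T.zE2 (YS.y m)) (u2 m))
    -- ultrawarp of the (U-D) core double vector bundle:
    -- warp_up(Z(m)) -₂,₃ Z₁₂(warp_down(m)) = 0̂_{Z(m)} +₁,₂ u₃(m)
    (hu3 : ∀ m : M, T.UltracoreAt m (u3 m) ∧
      T.up.vB.sub (wup (ZS.z m)) (ZS.z12 (wdown m)) =
        T.back.vA.add (T.zE3 (ZS.z m)) (u3 m)) :
    ∀ m : M,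
      T.up.vB.add (u1 m) (T.up.vB.add (u2 m) (u3 m)) = T.tripleZero m := by
  intro m
  -- specialize the hypotheses, in canonical names
  obtain ⟨⟨hwu1, hwu2⟩, D3⟩ := hwup (ZS.z m)
  obtain ⟨⟨hwd1, hwd2⟩, hDdown⟩ := hwdown m
  obtain ⟨⟨hwb1, hwb2⟩, D1⟩ := hwback (XS.x m)
  obtain ⟨⟨hwf1, hwf2⟩, hDfront⟩ := hwfront m
  obtain ⟨⟨hwl1, hwl2⟩, D2⟩ := hwleft (YS.y m)
  obtain ⟨⟨hwr1, hwr2⟩, hDright⟩ := hwright m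
  obtain ⟨⟨hA_u1, hB_u1, hC_u1⟩, hU1⟩ := hu1 m
  obtain ⟨⟨hA_u2, hB_u2, hC_u2⟩, hU2⟩ := hu2 m
  obtain ⟨⟨hA_u3, hB_u3, hC_u3⟩, hU3⟩ := hu3 m
  clear hwup hwdown hwback hwfront hwleft hwright hu1 hu2 hu3
  simp only [← T.coh_E_E12, ← T.coh_E_E13, ← T.coh_E_E23, T.coh_E12_E1, T.coh_E12_E2,
    T.coh_E13_E1, T.coh_E13_E3, T.coh_E23_E2, T.coh_E23_E3, ← T.coh_E1_M, ← T.coh_E2_M,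
    ← T.coh_E3_M, TVB.zE1, TVB.zE2, TVB.zE3, TVB.tripleZero] at *
  have c1 : T.left.vA = T.back.vA := T.coh_E_E12.symm
  have c2 : T.back.vB = T.up.vA := T.coh_E_E13.symm
  have c3 : T.left.vB = T.up.vB := T.coh_E_E23.symm
  have c4 : T.back.bA = T.down.vA := T.coh_E12_E1
  have c5 : T.left.bA = T.down.vB := T.coh_E12_E2
  have c6 : T.back.bB = T.right.vA := T.coh_E13_E1
  have c7 : T.up.bA = T.right.vB := T.coh_E13_E3
  have c8 : T.left.bB = T.front.vA := T.coh_E23_E2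
  have c9 : T.up.bB = T.front.vB := T.coh_E23_E3
  have c10 : T.right.bA = T.down.bA := T.coh_E1_M.symm
  have c11 : T.front.bA = T.down.bB := T.coh_E2_M.symm
  have c12 : T.front.bB = T.right.bB := T.coh_E3_M.symm
  -- abbreviations
  set xm := XS.x m with hxm
  set ym := YS.y m with hym
  set zm := ZS.z m with hzm
  set y1x := YS.y1 xm with hy1x
  set x2y := XS.x2 ym with hx2y
  set x3z := XS.x3 zm with hx3z
  set z1x := ZS.z1 xm with hz1x
  set z2y := ZS.z2 ym with hz2y
  set y3z := YS.y3 zm with hy3z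
  set P1 := YS.y13 z1x with hP1
  set P2 := ZS.z12 y1x with hP2
  set P3 := XS.x23 z2y with hP3
  set P4 := ZS.z12 x2y with hP4
  set P5 := YS.y13 x3z with hP5
  set P6 := XS.x23 y3z with hP6
  set Wb := wback xm with hWb
  set Wl := wleft ym with hWl
  set Wu := wup zm with hWu
  set Xwf := XS.x23 (wfront m) with hXwf
  set Ywr := YS.y13 (wright m) with hYwr
  set Zwd := ZS.z12 (wdown m) with hZwd
  set u1m := u1 m with hu1m
  set u2m := u2 m with hu2m
  set u3m := u3 m with hu3m
  set e1z := T.down.bA.zero m with he1z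
  set e2z := T.down.bB.zero m with he2z
  set e3z := T.right.bB.zero m with he3z
  -- base projections
  have hπxm : T.down.bA.π xm = m := XS.secx m
  have hπym : T.down.bB.π ym = m := YS.secy m
  have hπzm : T.right.bB.π zm = m := ZS.secz m
  -- E12 projections
  have hA_y1x : T.down.vA.π y1x = xm := YS.sec1 xm
  have hB_y1x : T.down.vB.π y1x = ym := by rw [hy1x, YS.over1, hπxm]
  have hA_x2y : T.down.vA.π x2y = xm := by rw [hx2y, XS.over2, hπym]
  have hB_x2y : T.down.vB.π x2y = ym := XS.sec2 ym
  -- E13 projections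
  have hA_x3z : T.right.vA.π x3z = xm := by
    rw [hx3z, XS.over3, hπzm]
  have hB_x3z : T.right.vB.π x3z = zm := XS.sec3 zm
  have hA_z1x : T.right.vA.π z1x = xm := ZS.sec1 xm
  have hB_z1x : T.right.vB.π z1x = zm := by
    rw [hz1x, ZS.over1, c10, hπxm]
  -- E23 projections
  have hA_z2y : T.front.vA.π z2y = ym := ZS.sec2 ym
  have hB_z2y : T.front.vB.π z2y = zm := by
    rw [hz2y, ZS.over2, c11, hπym]
  have hA_y3z : T.front.vA.π y3z = ym := by
    rw [hy3z, YS.over3, c12, hπzm]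
  have hB_y3z : T.front.vB.π y3z = zm := YS.sec3 zm
  -- E projections of the P's
  have hA_P1 : T.back.vA.π P1 = y1x := by rw [hP1, YS.over12, hA_z1x]
  have hB_P1 : T.up.vA.π P1 = z1x := YS.sec13 z1x
  have hC_P1 : T.up.vB.π P1 = y3z := by rw [hP1, YS.over23, hB_z1x]
  have hA_P2 : T.back.vA.π P2 = y1x := ZS.sec12 y1x
  have hB_P2 : T.up.vA.π P2 = z1x := by rw [hP2, ZS.over13, hA_y1x]
  have hC_P2 : T.up.vB.π P2 = z2y := by rw [hP2, ZS.over23, hB_y1x]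
  have hA_P3 : T.back.vA.π P3 = x2y := by rw [hP3, XS.over12, hA_z2y]
  have hB_P3 : T.up.vA.π P3 = x3z := by rw [hP3, XS.over13, hB_z2y]
  have hC_P3 : T.up.vB.π P3 = z2y := XS.sec23 z2y
  have hA_P4 : T.back.vA.π P4 = x2y := ZS.sec12 x2y
  have hB_P4 : T.up.vA.π P4 = z1x := by rw [hP4, ZS.over13, hA_x2y]
  have hC_P4 : T.up.vB.π P4 = z2y := by rw [hP4, ZS.over23, hB_x2y]
  have hA_P5 : T.back.vA.π P5 = y1x := by rw [hP5, YS.over12, hA_x3z]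
  have hB_P5 : T.up.vA.π P5 = x3z := YS.sec13 x3z
  have hC_P5 : T.up.vB.π P5 = y3z := by rw [hP5, YS.over23, hB_x3z]
  have hA_P6 : T.back.vA.π P6 = x2y := by rw [hP6, XS.over12, hA_y3z]
  have hB_P6 : T.up.vA.π P6 = x3z := by rw [hP6, XS.over13, hB_y3z]
  have hC_P6 : T.up.vB.π P6 = y3z := XS.sec23 y3z
  -- general projection combinators on E (canonical names)
  have hπB_addA : ∀ d d', T.back.vA.π d = T.back.vA.π d' →
      T.up.vA.π (T.back.vA.add d d') = T.right.vA.add (T.up.vA.π d) (T.up.vA.π d') := by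
    intro d d' h; have := T.back.πB_addA d d' h; rwa [c2, c6] at this
  have hπB_subA : ∀ d d', T.back.vA.π d = T.back.vA.π d' →
      T.up.vA.π (T.back.vA.sub d d') = T.right.vA.sub (T.up.vA.π d) (T.up.vA.π d') := by
    intro d d' h; have := T.back.πB_subA h; rwa [c2, c6] at this
  have hπC_addA : ∀ d d', T.back.vA.π d = T.back.vA.π d' →
      T.up.vB.π (T.back.vA.add d d') = T.front.vA.add (T.up.vB.π d) (T.up.vB.π d') := by
    intro d d' h; have := T.left.πB_addA d d' (by rwa [c1]); rwa [c1, c3, c8] at this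
  have hπC_subA : ∀ d d', T.back.vA.π d = T.back.vA.π d' →
      T.up.vB.π (T.back.vA.sub d d') = T.front.vA.sub (T.up.vB.π d) (T.up.vB.π d') := by
    intro d d' h; have := T.left.πB_subA (d := d) (d' := d') (by rwa [c1])
    rwa [c1, c3, c8] at this
  have hπA_addB : ∀ d d', T.up.vA.π d = T.up.vA.π d' →
      T.back.vA.π (T.up.vA.add d d') = T.down.vA.add (T.back.vA.π d) (T.back.vA.π d') := by
    intro d d' h; have := T.back.πA_addB d d' (by rwa [c2]); rwa [c2, c4] at this
  have hπA_subB : ∀ d d', T.up.vA.π d = T.up.vA.π d' →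
      T.back.vA.π (T.up.vA.sub d d') = T.down.vA.sub (T.back.vA.π d) (T.back.vA.π d') := by
    intro d d' h; have := T.back.πA_subB (d := d) (d' := d') (by rwa [c2])
    rwa [c2, c4] at this
  have hπC_addB : ∀ d d', T.up.vA.π d = T.up.vA.π d' →
      T.up.vB.π (T.up.vA.add d d') = T.front.vB.add (T.up.vB.π d) (T.up.vB.π d') := by
    intro d d' h; have := T.up.πB_addA d d' h; rwa [c9] at this
  have hπC_subB : ∀ d d', T.up.vA.π d = T.up.vA.π d' →
      T.up.vB.π (T.up.vA.sub d d') = T.front.vB.sub (T.up.vB.π d) (T.up.vB.π d') := by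
    intro d d' h; have := T.up.πB_subA h; rwa [c9] at this
  have hπA_addC : ∀ d d', T.up.vB.π d = T.up.vB.π d' →
      T.back.vA.π (T.up.vB.add d d') = T.down.vB.add (T.back.vA.π d) (T.back.vA.π d') := by
    intro d d' h; have := T.left.πA_addB d d' (by rwa [c3]); rwa [c1, c3, c5] at this
  have hπA_subC : ∀ d d', T.up.vB.π d = T.up.vB.π d' →
      T.back.vA.π (T.up.vB.sub d d') = T.down.vB.sub (T.back.vA.π d) (T.back.vA.π d') := by
    intro d d' h; have := T.left.πA_subB (d := d) (d' := d') (by rwa [c3])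
    rwa [c1, c3, c5] at this
  have hπB_addC : ∀ d d', T.up.vB.π d = T.up.vB.π d' →
      T.up.vA.π (T.up.vB.add d d') = T.right.vB.add (T.up.vA.π d) (T.up.vA.π d') := by
    intro d d' h; have := T.up.πA_addB d d' h; rwa [c7] at this
  have hπB_subC : ∀ d d', T.up.vB.π d = T.up.vB.π d' →
      T.up.vA.π (T.up.vB.sub d d') = T.right.vB.sub (T.up.vA.π d) (T.up.vA.π d') := by
    intro d d' h; have := T.up.πA_subB (d := d) (d' := d') h; rwa [c7] at this
  have hπA_negB : ∀ d, T.back.vA.π (T.up.vA.neg d) = T.down.vA.neg (T.back.vA.π d) := by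
    intro d; have := T.back.πA_negB d; rwa [c2, c4] at this
  have hπC_negB : ∀ d, T.up.vB.π (T.up.vA.neg d) = T.front.vB.neg (T.up.vB.π d) := by
    intro d; have := T.up.πB_negA d; rwa [c9] at this
  -- E-level projections of zero sections
  have hπB_zA : ∀ a : E12, T.up.vA.π (T.back.vA.zero a)
      = T.right.vA.zero (T.down.vA.π a) := by
    intro a; have := T.back.πB_zeroA a; rwa [c2, c6, c4] at this
  have hπC_zA : ∀ a : E12, T.up.vB.π (T.back.vA.zero a)
      = T.front.vA.zero (T.down.vB.π a) := by
    intro a; have := T.left.πB_zeroA a; rwa [c1, c3, c8, c5] at this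
  have hπA_zB : ∀ b : E13, T.back.vA.π (T.up.vA.zero b)
      = T.down.vA.zero (T.right.vA.π b) := by
    intro b; have := T.back.πA_zeroB b; rwa [c2, c4, c6] at this
  have hπC_zB : ∀ b : E13, T.up.vB.π (T.up.vA.zero b)
      = T.front.vB.zero (T.right.vB.π b) := by
    intro b; have := T.up.πB_zeroA b; rwa [c7, c9] at this
  have hπA_zC : ∀ b : E23, T.back.vA.π (T.up.vB.zero b)
      = T.down.vB.zero (T.front.vA.π b) := by
    intro b; have := T.left.πA_zeroB b; rwa [c1, c3, c5, c8] at this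
  have hπB_zC : ∀ b : E23, T.up.vA.π (T.up.vB.zero b)
      = T.right.vB.zero (T.front.vB.π b) := by
    intro b; have := T.up.πA_zeroB b; rwa [c7, c9] at this
  -- zero-section evaluations of the grid maps
  have hz_x2 : XS.x2 e2z = T.down.vA.zero xm := by
    have h := map_zero_of_smul T.down.bB T.down.vA XS.x2 XS.x2_smul ym
    rw [hπym, hA_x2y] at h; exact h
  have hz_y1 : YS.y1 e1z = T.down.vB.zero ym := by
    have h := map_zero_of_smul T.down.bA T.down.vB YS.y1 YS.y1_smul xm
    rw [hπxm, hB_y1x] at h; exact h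
  have hz_x3 : XS.x3 e3z = T.right.vA.zero xm := by
    have h := map_zero_of_smul T.right.bB T.right.vA XS.x3 XS.x3_smul zm
    rw [hπzm, hA_x3z] at h; exact h
  have hz_z1 : ZS.z1 e1z = T.right.vB.zero zm := by
    have h := map_zero_of_smul T.right.bA T.right.vB ZS.z1 ZS.z1_smul xm
    rw [c10, hπxm, hB_z1x] at h; exact h
  have hz_y3 : YS.y3 e3z = T.front.vA.zero ym := by
    have h := map_zero_of_smul T.front.bB T.front.vA YS.y3 YS.y3_smul zm
    rw [c12, hπzm, hA_y3z] at h; exact h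
  have hz_z2 : ZS.z2 e2z = T.front.vB.zero zm := by
    have h := map_zero_of_smul T.front.bA T.front.vB ZS.z2 ZS.z2_smul ym
    rw [c11, hπym, hB_z2y] at h; exact h
  have hz_x23 : XS.x23 (T.front.vA.zero ym) = T.back.vA.zero x2y := by
    have h := map_zero_of_smul T.front.vA T.back.vA XS.x23 XS.map_smul2 z2y
    rw [hA_z2y, ← hP3, hA_P3] at h; exact h
  have hz_y13 : YS.y13 (T.right.vA.zero xm) = T.back.vA.zero y1x := by
    have h := map_zero_of_smul T.right.vA T.back.vA YS.y13 YS.map_smul1 z1x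
    rw [hA_z1x, ← hP1, hA_P1] at h; exact h
  have hz_z12 : ZS.z12 (T.down.vA.zero xm) = T.up.vA.zero z1x := by
    have h := map_zero_of_smul T.down.vA T.up.vA ZS.z12 ZS.map_smul1 y1x
    rw [hA_y1x, ← hP2, hB_P2] at h; exact h
  -- projections of the lifted lower warps
  have hA_Xwf : T.back.vA.π Xwf = T.down.vA.zero xm := by
    rw [hXwf, XS.over12, hwf1, hz_x2]
  have hB_Xwf : T.up.vA.π Xwf = T.right.vA.zero xm := by
    rw [hXwf, XS.over13, hwf2, hz_x3]
  have hA_Ywr : T.back.vA.π Ywr = T.down.vB.zero ym := by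
    rw [hYwr, YS.over12, hwr1, hz_y1]
  have hC_Ywr : T.up.vB.π Ywr = T.front.vA.zero ym := by
    rw [hYwr, YS.over23, hwr2, hz_y3]
  have hB_Zwd : T.up.vA.π Zwd = T.right.vB.zero zm := by
    rw [hZwd, ZS.over13, hwd1, hz_z1]
  have hC_Zwd : T.up.vB.π Zwd = T.front.vB.zero zm := by
    rw [hZwd, ZS.over23, hwd2, hz_z2]
  -- small zero projections
  have hz12B : T.down.vB.π (T.down.vA.zero xm) = e2z := by
    rw [T.down.πB_zeroA, hπxm]
  have hz12A : T.down.vA.π (T.down.vB.zero ym) = e1z := by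
    rw [T.down.πA_zeroB, hπym]
  have hz13B : T.right.vB.π (T.right.vA.zero xm) = e3z := by
    have := T.right.πB_zeroA xm; rw [c10, hπxm] at this; exact this
  have hz13A : T.right.vA.π (T.right.vB.zero zm) = e1z := by
    have := T.right.πA_zeroB zm; rw [c10, hπzm] at this; exact this
  have hz23B : T.front.vB.π (T.front.vA.zero ym) = e3z := by
    have := T.front.πB_zeroA ym; rw [c12, c11, hπym] at this; exact this
  have hz23A : T.front.vA.π (T.front.vB.zero zm) = e2z := by
    have := T.front.πA_zeroB zm; rw [c11, c12, hπzm] at this; exact this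
  -- the six D-equations
  have D4 : T.back.vA.sub P5 P1 = T.up.vB.add (T.back.vA.zero y1x) Ywr := by
    have hL := map_sub_of T.right.vA T.back.vA YS.y13 YS.map_add1 YS.map_smul1
      (hA_x3z.trans hA_z1x.symm)
    have hR := YS.map_add3 (T.right.vA.zero xm) (wright m) (by rw [hz13B, hwr2])
    have h := congrArg YS.y13 hDright
    rw [hL, hR, hz_y13, ← hP5, ← hP1, ← hYwr] at h; exact h
  have D5 : T.back.vA.sub P3 P6 = T.up.vA.add (T.back.vA.zero x2y) Xwf := by
    have hL := map_sub_of T.front.vA T.back.vA XS.x23 XS.map_add2 XS.map_smul2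
      (hA_z2y.trans hA_y3z.symm)
    have hR := XS.map_add3 (T.front.vA.zero ym) (wfront m) (by rw [hz23B, hwf2])
    have h := congrArg XS.x23 hDfront
    rw [hL, hR, hz_x23, ← hP3, ← hP6, ← hXwf] at h; exact h
  have D6 : T.up.vA.sub P2 P4 = T.up.vB.add (T.up.vA.zero z1x) Zwd := by
    have hL := map_sub_of T.down.vA T.up.vA ZS.z12 ZS.map_add1 ZS.map_smul1
      (hA_y1x.trans hA_x2y.symm)
    have hR := ZS.map_add2 (T.down.vA.zero xm) (wdown m) (by rw [hz12B, hwd2])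
    have h := congrArg ZS.z12 hDdown
    rw [hL, hR, hz_z12, ← hP2, ← hP4, ← hZwd] at h; exact h
  -- the base differences dl = δ, rr = ρ and their cores
  set dl := T.down.vA.sub y1x x2y with hdl
  set rr := T.right.vA.sub x3z z1x with hrr
  set dlc := T.down.vB.sub dl (T.down.vA.zero xm) with hdlc
  set rrc := T.right.vB.sub rr (T.right.vA.zero xm) with hrrc
  have hdl1 : T.down.vA.π dl = xm := by
    rw [hdl, T.down.vA.pi_sub (hA_y1x.trans hA_x2y.symm), hA_y1x]
  have hdl2 : T.down.vB.π dl = e2z := by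
    rw [hdl, T.down.πB_subA (hA_y1x.trans hA_x2y.symm), hB_y1x, hB_x2y,
      T.down.bB.sub_self, hπym]
  have hrr1 : T.right.vA.π rr = xm := by
    rw [hrr, T.right.vA.pi_sub (hA_x3z.trans hA_z1x.symm), hA_x3z]
  have hrr2 : T.right.vB.π rr = e3z := by
    have h := T.right.πB_subA (d := x3z) (d' := z1x) (hA_x3z.trans hA_z1x.symm)
    rw [hrr, h, hB_x3z, hB_z1x, T.right.bB.sub_self, hπzm]
  have hdlc1 : T.down.vA.π dlc = e1z := by
    rw [hdlc, T.down.πA_subB (hdl2.trans hz12B.symm), hdl1, T.down.vA.π_zero,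
      T.down.bA.sub_self, hπxm]
  have hdlc2 : T.down.vB.π dlc = e2z := by
    rw [hdlc, T.down.vB.pi_sub (hdl2.trans hz12B.symm), hdl2]
  have hrrc1 : T.right.vA.π rrc = e1z := by
    have h := T.right.πA_subB (d := rr) (d' := T.right.vA.zero xm)
      (hrr2.trans hz13B.symm)
    rw [c10] at h
    rw [hrrc, h, hrr1, T.right.vA.π_zero, T.down.bA.sub_self, hπxm]
  have hrrc2 : T.right.vB.π rrc = e3z := by
    rw [hrrc, T.right.vB.pi_sub (hrr2.trans hz13B.symm), hrr2]
  have hdleq : T.down.vB.add (T.down.vA.zero xm) dlc = dl :=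
    T.down.vB.add_sub_cancel' (hz12B.trans hdl2.symm)
  have hrreq : T.right.vB.add (T.right.vA.zero xm) rrc = rr :=
    T.right.vB.add_sub_cancel' (hz13B.trans hrr2.symm)
  -- derived projections of the face warps
  have hB_Wl : T.up.vA.π Wl = rrc := by
    have h := congrArg (T.up.vA.π) D2
    rw [hπB_subA P3 P4 (hA_P3.trans hA_P4.symm), hB_P3, hB_P4, ← hrr] at h
    rw [hπB_addC _ _ (by rw [hπC_zA, hB_x2y, hwl2]), hπB_zA, hA_x2y] at h
    have hπ : T.right.vB.π (T.up.vA.π Wl) = T.right.vB.π (T.right.vA.zero xm) := by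
      have hp := T.up.proj_compat Wl
      rw [c7, c9] at hp
      rw [hp, hwl2, hz23B, hz13B]
    rw [hrrc]
    exact T.right.vB.eq_sub_of_add_eq hπ h.symm
  have hB_Ywr : T.up.vA.π Ywr = rrc := by
    have h := congrArg (T.up.vA.π) D4
    rw [hπB_subA P5 P1 (hA_P5.trans hA_P1.symm), hB_P5, hB_P1, ← hrr] at h
    rw [hπB_addC _ _ (by rw [hπC_zA, hB_y1x, hC_Ywr]), hπB_zA, hA_y1x] at h
    have hπ : T.right.vB.π (T.up.vA.π Ywr) = T.right.vB.π (T.right.vA.zero xm) := by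
      have hp := T.up.proj_compat Ywr
      rw [c7, c9] at hp
      rw [hp, hC_Ywr, hz23B, hz13B]
    rw [hrrc]
    exact T.right.vB.eq_sub_of_add_eq hπ h.symm
  have hA_Wu : T.back.vA.π Wu = dlc := by
    have h := congrArg (T.back.vA.π) D3
    rw [hπA_subB P5 P6 (hB_P5.trans hB_P6.symm), hA_P5, hA_P6, ← hdl] at h
    rw [hπA_addC _ _ (by rw [hπC_zB, hB_x3z, hwu2]), hπA_zB, hA_x3z] at h
    have hπ : T.down.vB.π (T.back.vA.π Wu) = T.down.vB.π (T.down.vA.zero xm) := by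
      have hp := T.left.proj_compat Wu
      rw [c1, c3, c5, c8] at hp
      rw [hp, hwu2, hz23A, hz12B]
    rw [hdlc]
    exact T.down.vB.eq_sub_of_add_eq hπ h.symm
  have hA_Zwd : T.back.vA.π Zwd = dlc := by
    have h := congrArg (T.back.vA.π) D6
    rw [hπA_subB P2 P4 (hB_P2.trans hB_P4.symm), hA_P2, hA_P4, ← hdl] at h
    rw [hπA_addC _ _ (by rw [hπC_zB, hB_z1x, hC_Zwd]), hπA_zB, hA_z1x] at h
    have hπ : T.down.vB.π (T.back.vA.π Zwd) = T.down.vB.π (T.down.vA.zero xm) := by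
      have hp := T.left.proj_compat Zwd
      rw [c1, c3, c5, c8] at hp
      rw [hp, hC_Zwd, hz23A, hz12B]
    rw [hdlc]
    exact T.down.vB.eq_sub_of_add_eq hπ h.symm
  -- double zeros
  have dzd : T.down.vA.zero e1z = T.down.vB.zero e2z := T.down.double_zero m
  have dzr : T.right.vA.zero e1z = T.right.vB.zero e3z := by
    have := T.right.double_zero m; rwa [c10] at this
  have dzf : T.front.vA.zero e2z = T.front.vB.zero e3z := by
    have := T.front.double_zero m; rwa [c11, c12] at this
  -- the six composite summands
  set Cy := T.up.vB.add (T.back.vA.zero y1x) Ywr with hCydef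
  set By := T.up.vA.add (T.back.vA.zero y1x) Wb with hBydef
  set Cx := T.up.vB.add (T.back.vA.zero x2y) Wl with hCxdef
  set Bx := T.up.vA.add (T.back.vA.zero x2y) Xwf with hBxdef
  set Cu := T.up.vB.add (T.up.vA.zero x3z) Wu with hCudef
  set Cd := T.up.vB.add (T.up.vA.zero z1x) Zwd with hCddef
  -- projections of zero sections at our points
  have hB_zAy : T.up.vA.π (T.back.vA.zero y1x) = T.right.vA.zero xm := by
    rw [hπB_zA, hA_y1x]
  have hB_zAx : T.up.vA.π (T.back.vA.zero x2y) = T.right.vA.zero xm := by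
    rw [hπB_zA, hA_x2y]
  have hC_zAy : T.up.vB.π (T.back.vA.zero y1x) = T.front.vA.zero ym := by
    rw [hπC_zA, hB_y1x]
  have hC_zAx : T.up.vB.π (T.back.vA.zero x2y) = T.front.vA.zero ym := by
    rw [hπC_zA, hB_x2y]
  have hC_zBx3 : T.up.vB.π (T.up.vA.zero x3z) = T.front.vB.zero zm := by
    rw [hπC_zB, hB_x3z]
  have hC_zBz1 : T.up.vB.π (T.up.vA.zero z1x) = T.front.vB.zero zm := by
    rw [hπC_zB, hB_z1x]
  have hA_zBx3 : T.back.vA.π (T.up.vA.zero x3z) = T.down.vA.zero xm := by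
    rw [hπA_zB, hA_x3z]
  have hA_zBz1 : T.back.vA.π (T.up.vA.zero z1x) = T.down.vA.zero xm := by
    rw [hπA_zB, hA_z1x]
  -- projections of the composite summands
  have hA_Cy : T.back.vA.π Cy = y1x := by
    rw [hCydef, hπA_addC _ _ (by rw [hC_zAy, hC_Ywr]), T.back.vA.π_zero, hA_Ywr]
    have := T.down.vB.add_zero y1x; rwa [hB_y1x] at this
  have hA_By : T.back.vA.π By = y1x := by
    rw [hBydef, hπA_addB _ _ (by rw [hB_zAy, hwb2]), T.back.vA.π_zero, hwb1]
    have := T.down.vA.add_zero y1x; rwa [hA_y1x] at this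
  have hA_Cx : T.back.vA.π Cx = x2y := by
    rw [hCxdef, hπA_addC _ _ (by rw [hC_zAx, hwl2]), T.back.vA.π_zero, hwl1]
    have := T.down.vB.add_zero x2y; rwa [hB_x2y] at this
  have hA_Bx : T.back.vA.π Bx = x2y := by
    rw [hBxdef, hπA_addB _ _ (by rw [hB_zAx, hB_Xwf]), T.back.vA.π_zero, hA_Xwf]
    have := T.down.vA.add_zero x2y; rwa [hA_x2y] at this
  have hB_Cy : T.up.vA.π Cy = rr := by
    rw [hCydef, hπB_addC _ _ (by rw [hC_zAy, hC_Ywr]), hB_zAy, hB_Ywr, hrrc, hrreq]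
  have hB_Cx : T.up.vA.π Cx = rr := by
    rw [hCxdef, hπB_addC _ _ (by rw [hC_zAx, hwl2]), hB_zAx, hB_Wl, hrrc, hrreq]
  have hB_By : T.up.vA.π By = T.right.vA.zero xm := by
    rw [hBydef, T.up.vA.π_add _ _ (by rw [hB_zAy, hwb2]), hB_zAy]
  have hB_Bx : T.up.vA.π Bx = T.right.vA.zero xm := by
    rw [hBxdef, T.up.vA.π_add _ _ (by rw [hB_zAx, hB_Xwf]), hB_zAx]
  have hB_Cu : T.up.vA.π Cu = x3z := by
    rw [hCudef, hπB_addC _ _ (by rw [hC_zBx3, hwu2]), T.up.vA.π_zero, hwu1]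
    have := T.right.vB.add_zero x3z; rwa [hB_x3z] at this
  have hB_Cd : T.up.vA.π Cd = z1x := by
    rw [hCddef, hπB_addC _ _ (by rw [hC_zBz1, hC_Zwd]), T.up.vA.π_zero, hB_Zwd]
    have := T.right.vB.add_zero z1x; rwa [hB_z1x] at this
  have hA_Cu : T.back.vA.π Cu = T.down.vB.add (T.down.vA.zero xm) dlc := by
    rw [hCudef, hπA_addC _ _ (by rw [hC_zBx3, hwu2]), hA_zBx3, hA_Wu]
  have hA_Cd : T.back.vA.π Cd = T.down.vB.add (T.down.vA.zero xm) dlc := by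
    rw [hCddef, hπA_addC _ _ (by rw [hC_zBz1, hC_Zwd]), hA_zBz1, hA_Zwd]
  -- the γ-decompositions of the P's
  have g1 : P2 = T.back.vA.add By P1 :=
    T.back.vA.eq_add_of_sub_eq (hA_P2.trans hA_P1.symm) D1
  have g2 : P2 = T.up.vA.add Cd P4 :=
    T.up.vA.eq_add_of_sub_eq (hB_P2.trans hB_P4.symm) D6
  have g5 : P5 = T.up.vA.add Cu P6 :=
    T.up.vA.eq_add_of_sub_eq (hB_P5.trans hB_P6.symm) D3
  have g6 : P5 = T.back.vA.add Cy P1 :=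
    T.back.vA.eq_add_of_sub_eq (hA_P5.trans hA_P1.symm) D4
  -- the MASTER identity
  set V3' := T.back.vA.sub Wu Zwd with hV3def
  have way1 : T.back.vA.sub P5 P2 = T.back.vA.sub Cy By := by
    calc T.back.vA.sub P5 P2
        = T.back.vA.sub (T.back.vA.add Cy P1) (T.back.vA.add By P1) := by rw [← g6, ← g1]
      _ = T.back.vA.sub Cy By :=
          T.back.vA.add_sub_add_right_cancel (hA_Cy.trans hA_P1.symm)
            (hA_By.trans hA_P1.symm)
  have way2 : T.back.vA.sub P5 P2
      = T.up.vA.add (T.back.vA.sub Cu Cd) (T.back.vA.sub P6 P4) := by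
    have h := T.back.subA_addB (d₁ := Cu) (d₂ := P6) (d₃ := Cd) (d₄ := P4)
      (by rw [c2, hB_Cu, hB_P6]) (by rw [c2, hB_Cd, hB_P4])
      (by rw [hA_Cu, hA_Cd]) (hA_P6.trans hA_P4.symm)
    rw [c2] at h
    rw [← g5, ← g2] at h
    exact h
  have hCuCd : T.back.vA.sub Cu Cd = T.up.vB.add (T.up.vA.zero rr) V3' := by
    have h := T.left.subA_addB (d₁ := T.up.vA.zero x3z) (d₂ := Wu)
      (d₃ := T.up.vA.zero z1x) (d₄ := Zwd)
      (by rw [c3, hC_zBx3, hwu2]) (by rw [c3, hC_zBz1, hC_Zwd])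
      (by rw [c1, hA_zBx3, hA_zBz1]) (by rw [c1, hA_Wu, hA_Zwd])
    rw [c1, c3] at h
    have hzz := T.back.zeroB_sub (b := x3z) (b' := z1x) (by rw [c6, hA_x3z, hA_z1x])
    rw [c2, c6] at hzz
    rw [← hzz, ← hrr] at h
    rw [← hCudef, ← hCddef, ← hV3def] at h
    exact h
  have hP64 : T.back.vA.sub P6 P4 = T.back.vA.sub Cx Bx := by
    have h := T.back.vA.sub_sub_sub (p := P3) (q := P4) (r := P6)
      (hA_P4.trans hA_P3.symm) (hA_P6.trans hA_P3.symm)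
    rw [D2, D5] at h
    exact h.symm
  set W3 := T.up.vB.add (T.up.vA.zero rr) V3' with hW3def
  have master : T.back.vA.sub Cy By = T.up.vA.add W3 (T.back.vA.sub Cx Bx) :=
    way1.symm.trans (way2.trans (by rw [hCuCd, hP64]))
  -- projections needed for MASTER2
  have hB_V3 : T.up.vA.π V3' = T.right.vA.zero e1z := by
    rw [hV3def, hπB_subA _ _ (hA_Wu.trans hA_Zwd.symm), hwu1, hB_Zwd,
      T.right.vA.sub_self, hz13A]
  have hC_V3 : T.up.vB.π V3' = T.front.vA.zero e2z := by
    rw [hV3def, hπC_subA _ _ (hA_Wu.trans hA_Zwd.symm), hwu2, hC_Zwd,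
      T.front.vA.sub_self, hz23A]
  have hB_W3 : T.up.vA.π W3 = rr := by
    rw [hW3def, hπB_addC _ _ (by rw [hπC_zB, hrr2, hC_V3, dzf]),
      T.up.vA.π_zero, hB_V3]
    have hz : T.right.vA.zero e1z = T.right.vB.zero (T.right.vB.π rr) := by
      rw [dzr, hrr2]
    rw [hz, T.right.vB.add_zero]
  have hB_Phx : T.up.vA.π (T.back.vA.sub Cx Bx) = rr := by
    rw [hπB_subA _ _ (hA_Cx.trans hA_Bx.symm), hB_Cx, hB_Bx]
    have hz : T.right.vA.zero xm = T.right.vA.zero (T.right.vA.π rr) := by rw [hrr1]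
    rw [hz, T.right.vA.sub_zero']
  have master2 : T.up.vA.sub (T.back.vA.sub Cy By) (T.back.vA.sub Cx Bx) = W3 := by
    rw [master]
    exact T.up.vA.add_sub_cancel (by rw [hB_W3, hB_Phx])
  -- transform the LHS of master2
  set V2m := T.up.vA.sub Ywr Wl with hV2def
  set V1 := T.up.vA.sub Wb Xwf with hV1def
  have hzz2 : T.back.vA.zero dl
      = T.up.vA.sub (T.back.vA.zero y1x) (T.back.vA.zero x2y) := by
    have h := T.back.zeroA_sub (a := y1x) (a' := x2y) (by rw [c4, hA_y1x, hA_x2y])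
    rw [c2, c4] at h
    rw [hdl]; exact h
  have lhs1 : T.up.vA.sub (T.back.vA.sub Cy By) (T.back.vA.sub Cx Bx)
      = T.back.vA.sub (T.up.vA.sub Cy Cx) (T.up.vA.sub By Bx) := by
    have h := T.back.subB_subA (d₁ := Cy) (d₂ := By) (d₃ := Cx) (d₄ := Bx)
      (hA_Cy.trans hA_By.symm) (hA_Cx.trans hA_Bx.symm)
      (by rw [c2, hB_Cy, hB_Cx]) (by rw [c2, hB_By, hB_Bx])
    rw [c2] at h
    exact h
  have lhs2 : T.up.vA.sub Cy Cx = T.up.vB.add (T.back.vA.zero dl) V2m := by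
    have h := T.up.subA_addB (d₁ := T.back.vA.zero y1x) (d₂ := Ywr)
      (d₃ := T.back.vA.zero x2y) (d₄ := Wl)
      (by rw [hC_zAy, hC_Ywr]) (by rw [hC_zAx, hwl2])
      (by rw [hB_zAy, hB_zAx]) (by rw [hB_Ywr, hB_Wl])
    rw [← hCydef, ← hCxdef, ← hzz2, ← hV2def] at h
    exact h
  have lhs3 : T.up.vA.sub By Bx = T.up.vA.add (T.back.vA.zero dl) V1 := by
    have h := T.up.vA.add_sub_add (a := T.back.vA.zero y1x) (b := Wb)
      (c := T.back.vA.zero x2y) (d := Xwf) (p := T.right.vA.zero xm)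
      hB_zAy hwb2 hB_zAx hB_Xwf
    rw [← hBydef, ← hBxdef, ← hzz2, ← hV1def] at h
    exact h
  have master2' : T.back.vA.sub (T.up.vB.add (T.back.vA.zero dl) V2m)
      (T.up.vA.add (T.back.vA.zero dl) V1) = W3 := by
    rw [← lhs2, ← lhs3, ← lhs1, master2]
  -- identifications via the ultrawarp hypotheses
  have hcore_u2 : T.up.CoreAt e3z u2m := by
    constructor
    · rw [c7, hB_u2]; exact dzr
    · rw [c9, hC_u2]; exact dzf
  have hflip2 : T.up.vA.sub Wl Ywr = T.up.vB.add (T.up.vA.zero rrc) u2m := by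
    have h := T.up.warp_flip' (d := Wl) (d' := Ywr) (c := u2m)
      (by rw [hwl2, hC_Ywr]) (by rw [hB_Wl, hB_Ywr])
      (by rw [show T.up.bB.π (T.up.vB.π Wl) = e3z from by rw [c9, hwl2, hz23B]]
          exact hcore_u2)
      (by rw [hU2, T.zero_coh_E2, hwl2])
    rw [hB_Wl] at h
    exact h
  have hV2meq : V2m = T.up.vB.add (T.up.vA.zero rrc) (T.up.vA.neg u2m) := by
    rw [hV2def]
    have hns : T.up.vA.sub Ywr Wl = T.up.vA.neg (T.up.vA.sub Wl Ywr) :=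
      (T.up.vA.neg_sub (hB_Wl.trans hB_Ywr.symm)).symm
    rw [hns, hflip2, T.up.negA_addB
      (by rw [hπC_zB, hrrc2, hC_u2]; exact dzf.symm), T.up.vA.neg_zero']
  have hcore_u3 : T.left.CoreAt e2z u3m := by
    constructor
    · rw [c1, c5, hA_u3]; exact dzd
    · rw [c3, c8, hC_u3]
  have hV3eq : V3' = T.up.vB.add (T.back.vA.zero dlc) u3m := by
    have h := T.left.warp_flip' (d := Wu) (d' := Zwd) (c := u3m)
      (by rw [c3, hwu2, hC_Zwd]) (by rw [c1, hA_Wu, hA_Zwd])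
      (by rw [show T.left.bB.π (T.left.vB.π Wu) = e2z from by rw [c8, c3, hwu2, hz23A]]
          exact hcore_u3)
      (by rw [c1, c3, hwu2, ← T.zero_coh_E3]; exact hU3)
    rw [c1, c3] at h
    rw [hA_Wu, ← hV3def] at h
    exact h
  -- final phase abbreviations
  set Z1v := T.back.vA.zero (T.down.vA.zero xm) with hZ1def
  set Zdl := T.back.vA.zero dl with hZdldef
  set Zdlc := T.back.vA.zero dlc with hZdlcdef
  set Zrrc := T.up.vA.zero rrc with hZrrcdef
  set Zrr := T.up.vA.zero rr with hZrrdef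
  set u2n := T.up.vA.neg u2m with hu2ndef
  set Th := T.up.vB.zero (T.front.vA.zero e2z) with hThdef
  -- projections of the final-phase atoms
  have hC_Z1 : T.up.vB.π Z1v = T.front.vA.zero e2z := by rw [hZ1def, hπC_zA, hz12B]
  have hB_Z1 : T.up.vA.π Z1v = T.right.vA.zero xm := by
    rw [hZ1def, hπB_zA, T.down.vA.π_zero]
  have hC_Zdl : T.up.vB.π Zdl = T.front.vA.zero e2z := by rw [hZdldef, hπC_zA, hdl2]
  have hC_Zdlc : T.up.vB.π Zdlc = T.front.vA.zero e2z := by rw [hZdlcdef, hπC_zA, hdlc2]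
  have hB_Zdlc : T.up.vA.π Zdlc = T.right.vA.zero e1z := by rw [hZdlcdef, hπB_zA, hdlc1]
  have hA_Zdlc : T.back.vA.π Zdlc = dlc := T.back.vA.π_zero dlc
  have hC_Zrrc : T.up.vB.π Zrrc = T.front.vB.zero e3z := by rw [hZrrcdef, hπC_zB, hrrc2]
  have hA_Zrrc : T.back.vA.π Zrrc = T.down.vA.zero e1z := by rw [hZrrcdef, hπA_zB, hrrc1]
  have hC_u2n : T.up.vB.π u2n = T.front.vB.zero e3z := by
    rw [hu2ndef, hπC_negB, hC_u2, dzf, T.front.vB.neg_zero']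
  have hA_u2n : T.back.vA.π u2n = T.down.vA.zero e1z := by
    rw [hu2ndef, hπA_negB, hA_u2, T.down.vA.neg_zero']
  have hC_Th : T.up.vB.π Th = T.front.vA.zero e2z := by rw [hThdef, T.up.vB.π_zero]
  have hA_Th : T.back.vA.π Th = T.down.vB.zero e2z := by
    rw [hThdef, hπA_zC, T.front.vA.π_zero]
  have hz12idem : T.down.vB.add (T.down.vA.zero e1z) (T.down.vA.zero e1z)
      = T.down.vA.zero e1z := by
    rw [dzd, T.down.vB.zero_add_zero]
  have hC_V2m : T.up.vB.π V2m = T.front.vB.zero e3z := by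
    rw [hV2meq, T.up.vB.π_add _ _ (by rw [hC_Zrrc, hC_u2n]), hC_Zrrc]
  have hA_V2m : T.back.vA.π V2m = T.down.vA.zero e1z := by
    rw [hV2meq, hπA_addC _ _ (by rw [hC_Zrrc, hC_u2n]), hA_Zrrc, hA_u2n, hz12idem]
  -- the two zero decompositions
  have v0a : Zdl = T.up.vB.add Z1v Zdlc := by
    have h := T.left.zeroA_add (T.down.vA.zero xm) dlc (by rw [c5, hz12B, hdlc2])
    rw [c1, c3, c5] at h
    rw [hdleq] at h
    rw [hZdldef, hZ1def, hZdlcdef]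
    exact h
  have v0b : Zrr = T.up.vB.add Z1v Zrrc := by
    have h := T.up.zeroA_add (T.right.vA.zero xm) rrc (by rw [c7, hz13B, hrrc2])
    rw [c7] at h
    rw [hrreq, ← T.zero_coh_E1] at h
    rw [hZrrdef, hZ1def, hZrrcdef]
    exact h
  -- step v2
  have hcore_dlc : T.up.CoreAt e3z Zdlc :=
    ⟨by rw [c7, hB_Zdlc]; exact dzr, by rw [c9, hC_Zdlc]; exact dzf⟩
  have hcore_u1 : T.up.CoreAt e3z u1m :=
    ⟨by rw [c7, hB_u1]; exact dzr, by rw [c9, hC_u1]; exact dzf⟩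
  have hzid : T.up.vA.add Z1v Z1v = Z1v := by
    have h := T.back.zeroA_add (T.down.vA.zero xm) (T.down.vA.zero xm) rfl
    rw [c2, c4, T.down.vA.zero_add_zero, ← hZ1def] at h
    exact h.symm
  have v2 : T.up.vA.add Zdl (T.up.vB.add Z1v u1m) = T.up.vB.add Zdl u1m := by
    rw [v0a]
    rw [T.up.interchange' Z1v Zdlc Z1v u1m (by rw [hC_Z1, hC_Zdlc])
      (by rw [hC_Z1, hC_u1]) rfl (by rw [hB_Zdlc, hB_u1])]
    rw [hzid, T.up.coreAdd_eq hcore_dlc hcore_u1,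
      ← T.up.vB.add_assoc Z1v Zdlc u1m (by rw [hC_Z1, hC_Zdlc])
        (by rw [hC_Zdlc, hC_u1])]
  have hA_Zdl : T.back.vA.π Zdl = dl := by
    rw [hZdldef]; exact T.back.vA.π_zero dl
  have v3 : T.back.vA.sub (T.up.vB.add Zdl V2m) (T.up.vB.add Zdl u1m)
      = T.up.vB.add Zdl (T.back.vA.sub V2m u1m) := by
    have h := T.left.subA_addB (d₁ := Zdl) (d₂ := V2m) (d₃ := Zdl) (d₄ := u1m)
      (by rw [c3, hC_Zdl, hC_V2m]; exact dzf) (by rw [c3, hC_Zdl, hC_u1])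
      rfl (by rw [c1, hA_V2m, hA_u1])
    rw [c1, c3] at h
    rw [T.back.vA.sub_self Zdl, hA_Zdl, ← hZdldef] at h
    exact h
  have hTabsorb : T.up.vB.add Th u1m = u1m := by
    have hz : Th = T.up.vB.zero (T.up.vB.π u1m) := by rw [hThdef, hC_u1]
    rw [hz, T.up.vB.zero_add]
  have hThB : Th = T.up.vA.zero (T.right.vB.zero e3z) := by
    rw [hThdef, dzf, ← T.zero_coh_E3]
  have hz13A' : T.right.vA.π (T.right.vB.zero e3z) = e1z := by
    have h := T.right.πA_zeroB e3z
    rw [c10, he3z, T.right.bB.π_zero] at h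
    exact h
  have hsz : T.back.vA.sub Zrrc Th = Zrrc := by
    rw [hThB]
    have h2 := T.back.zeroB_sub (b := rrc) (b' := T.right.vB.zero e3z)
      (by rw [c6, hrrc1, hz13A'])
    rw [c2, c6] at h2
    have h3 : T.right.vA.sub rrc (T.right.vB.zero e3z) = rrc := by
      rw [← dzr]
      have hz : T.right.vA.zero e1z = T.right.vA.zero (T.right.vA.π rrc) := by
        rw [hrrc1]
      rw [hz, T.right.vA.sub_zero']
    rw [h3, ← hZrrcdef] at h2
    exact h2.symm
  have hcore_u2nL : T.left.CoreAt e2z u2n := by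
    constructor
    · rw [c1, c5, hA_u2n]; exact dzd
    · rw [c3, c8, hC_u2n]; exact dzf.symm
  have hcore_u1L : T.left.CoreAt e2z u1m := by
    constructor
    · rw [c1, c5, hA_u1]; exact dzd
    · rw [c3, c8, hC_u1]
  have hcsub : T.back.vA.sub u2n u1m = T.up.vB.sub u2n u1m := by
    have h := T.left.core_sub hcore_u2nL hcore_u1L
    rw [c1, c3] at h; exact h
  have v4 : T.back.vA.sub V2m u1m
      = T.up.vB.add Zrrc (T.up.vB.sub u2n u1m) := by
    conv_lhs => rw [hV2meq, ← hTabsorb]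
    have h := T.left.subA_addB (d₁ := Zrrc) (d₂ := u2n) (d₃ := Th) (d₄ := u1m)
      (by rw [c3, hC_Zrrc, hC_u2n]) (by rw [c3, hC_Th, hC_u1])
      (by rw [c1, hA_Zrrc, hA_Th]; exact dzd) (by rw [c1, hA_u2n, hA_u1])
    rw [c1, c3] at h
    rw [hsz, hcsub] at h
    exact h
  set Sv := T.up.vB.sub u2n u1m with hSdef
  have hC_S : T.up.vB.π Sv = T.front.vB.zero e3z := by
    rw [hSdef, T.up.vB.pi_sub (by rw [hC_u2n, hC_u1]; exact dzf.symm), hC_u2n]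
  have E5 : T.up.vB.add (T.up.vB.add Z1v Zdlc) (T.up.vB.add Zrrc Sv)
      = T.up.vB.add (T.up.vB.add Z1v Zrrc) (T.up.vB.add Zdlc u3m) := by
    calc T.up.vB.add (T.up.vB.add Z1v Zdlc) (T.up.vB.add Zrrc Sv)
        = T.up.vB.add Zdl (T.up.vB.add Zrrc Sv) := by rw [← v0a]
      _ = T.up.vB.add Zdl (T.back.vA.sub V2m u1m) := by rw [← v4]
      _ = T.back.vA.sub (T.up.vB.add Zdl V2m) (T.up.vB.add Zdl u1m) := v3.symm
      _ = T.back.vA.sub (T.up.vB.add Zdl V2m) (T.up.vA.add Zdl V1) := by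
          rw [hU1, v2]
      _ = W3 := master2'
      _ = T.up.vB.add (T.up.vB.add Z1v Zrrc) (T.up.vB.add Zdlc u3m) := by
          rw [hW3def, v0b, hV3eq]
  have hC_X : T.up.vB.π (T.up.vB.add Zrrc Sv) = T.front.vB.zero e3z := by
    rw [T.up.vB.π_add _ _ (by rw [hC_Zrrc, hC_S]), hC_Zrrc]
  have hC_Y : T.up.vB.π (T.up.vB.add Zdlc u3m) = T.front.vA.zero e2z := by
    rw [T.up.vB.π_add _ _ (by rw [hC_Zdlc, hC_u3]), hC_Zdlc]
  have E5' : T.up.vB.add Zdlc (T.up.vB.add Zrrc Sv)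
      = T.up.vB.add Zrrc (T.up.vB.add Zdlc u3m) := by
    have h1 := T.up.vB.add_assoc Z1v Zdlc (T.up.vB.add Zrrc Sv)
      (by rw [hC_Z1, hC_Zdlc]) (by rw [hC_Zdlc, hC_X]; exact dzf)
    have h2 := T.up.vB.add_assoc Z1v Zrrc (T.up.vB.add Zdlc u3m)
      (by rw [hC_Z1, hC_Zrrc]; exact dzf) (by rw [hC_Zrrc, hC_Y]; exact dzf.symm)
    refine T.up.vB.add_left_cancel (a := Z1v) ?_ ?_ (h1.symm.trans (E5.trans h2))
    · rw [T.up.vB.π_add _ _ (by rw [hC_Zdlc, hC_X]; exact dzf), hC_Zdlc, hC_Z1]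
    · rw [T.up.vB.π_add _ _ (by rw [hC_Zrrc, hC_Y]; exact dzf.symm), hC_Zrrc, hC_Z1]
      exact dzf.symm
  have E5'' : T.up.vB.add Zdlc Sv = T.up.vB.add Zdlc u3m := by
    have hcomm := T.up.vB.add_left_comm (a := Zdlc) (b := Zrrc) (c := Sv)
      (p := T.front.vA.zero e2z) hC_Zdlc (hC_Zrrc.trans dzf.symm)
      (hC_S.trans dzf.symm)
    have h := hcomm.symm.trans E5'
    refine T.up.vB.add_left_cancel (a := Zrrc) ?_ ?_ h
    · rw [T.up.vB.π_add _ _ (by rw [hC_Zdlc, hC_S]; exact dzf), hC_Zdlc, hC_Zrrc]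
      exact dzf
    · rw [T.up.vB.π_add _ _ (by rw [hC_Zdlc, hC_u3]), hC_Zdlc, hC_Zrrc]
      exact dzf
  have hSu3 : Sv = u3m := by
    refine T.up.vB.add_left_cancel (a := Zdlc) ?_ ?_ E5''
    · rw [hC_S, hC_Zdlc]; exact dzf.symm
    · rw [hC_u3, hC_Zdlc]
  have hneg : u2n = T.up.vB.neg u2m := by
    rw [hu2ndef]; exact T.up.core_neg hcore_u2
  rw [← hSu3, hSdef, hneg]
  have hfin := T.up.vB.final_algebra (u1 := u1m) (u2 := u2m) (by rw [hC_u2, hC_u1])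
  rw [hfin, hC_u1, hThdef]
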